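/- arXiv:1812.02107 — 8 statements merged into one kernel-verified Lean document; each statement's English description precedes it below -/
import Mathlib

section
/- For every positive integer n, if the j-th fibbinary number (in increasing order) is the n-th odd fibbinary number, then j = ⌊n·φ²⌋ − 1, where φ = (1+√5)/2 is the golden ratio. Equivalently, Z(n) = ⌊n·φ²⌋ − 1 for all n ≥ 1. -/
/-- A natural number is *fibbinary* if its binary representation
contains no two consecutive ones. -/
def IsFibbinary (m : ℕ) : Prop :=
  ∀ i : ℕ, ¬(m.testBit i = true ∧ m.testBit (i + 1) = true)

namespace OFIAux

open Nat

instance : DecidablePred IsFibbinary := fun m =>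
  decidable_of_iff (∀ i < m, ¬(m.testBit i = true ∧ m.testBit (i + 1) = true)) (by
    constructor
    · intro h i hi
      by_cases him : i < m
      · exact h i him hi
      · obtain ⟨h1, _⟩ := hi
        have : m < 2 ^ i := lt_of_le_of_lt (le_of_not_gt him) Nat.lt_two_pow_self
        rw [Nat.testBit_lt_two_pow this] at h1
        exact Bool.false_ne_true h1
    · intro h i _; exact h i)

lemma fib_zero : IsFibbinary 0 := by
  intro i ⟨h1, _⟩; rw [Nat.zero_testBit] at h1; exact Bool.false_ne_true h1

lemma fib_one : IsFibbinary 1 := by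
  intro i ⟨h1, h2⟩
  rcases Nat.eq_zero_or_pos i with rfl | hi
  · rw [Nat.testBit_add_one] at h2; simp at h2
  · have : (1:ℕ) < 2 ^ i := Nat.one_lt_two_pow (by omega)
    rw [Nat.testBit_lt_two_pow this] at h1; exact Bool.false_ne_true h1

lemma tb_two_mul (s i : ℕ) : (2 * s).testBit (i + 1) = s.testBit i := by
  rw [Nat.testBit_add_one, Nat.mul_div_cancel_left _ (by norm_num)]

lemma tb_two_mul_zero (s : ℕ) : (2 * s).testBit 0 = false := by
  simp [Nat.testBit_zero, Nat.mul_mod_right]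

lemma tb4_zero (s : ℕ) : (4 * s + 1).testBit 0 = true := by
  simp [Nat.testBit_zero]; omega

lemma tb4_one (s : ℕ) : (4 * s + 1).testBit 1 = false := by
  rw [Nat.testBit_add_one]
  have : (4 * s + 1) / 2 = 2 * s := by omega
  rw [this]; exact tb_two_mul_zero s

lemma tb4_two (s i : ℕ) : (4 * s + 1).testBit (i + 2) = s.testBit i := by
  rw [Nat.testBit_add_one]
  have : (4 * s + 1) / 2 = 2 * s := by omega
  rw [this, tb_two_mul]

lemma H1 (s : ℕ) : IsFibbinary (2 * s) ↔ IsFibbinary s := by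
  constructor
  · intro h i ⟨h1, h2⟩
    exact h (i + 1) ⟨by rw [tb_two_mul]; exact h1, by rw [tb_two_mul]; exact h2⟩
  · intro h i ⟨h1, h2⟩
    rcases Nat.eq_zero_or_pos i with rfl | hi
    · rw [tb_two_mul_zero] at h1; exact Bool.false_ne_true h1
    · obtain ⟨i', rfl⟩ := Nat.exists_eq_add_of_le hi
      rw [Nat.add_comm 1 i', tb_two_mul] at h1 h2
      exact h i' ⟨h1, h2⟩

lemma H2 (s : ℕ) : IsFibbinary (4 * s + 1) ↔ IsFibbinary s := by
  constructor
  · intro h i ⟨h1, h2⟩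
    exact h (i + 2) ⟨by rw [tb4_two]; exact h1, by rw [show i+2+1 = i+1+2 by ring, tb4_two]; exact h2⟩
  · intro h i ⟨h1, h2⟩
    match i with
    | 0 => rw [tb4_one] at h2; exact Bool.false_ne_true h2
    | 1 => rw [tb4_one] at h1; exact Bool.false_ne_true h1
    | (i' + 2) =>
      rw [tb4_two] at h1
      rw [show i'+2+1 = i'+1+2 by ring, tb4_two] at h2
      exact h i' ⟨h1, h2⟩

lemma H3 {k : ℕ} (hodd : Odd k) (hf : IsFibbinary k) : k % 4 = 1 := by
  have h0 : k % 2 = 1 := Nat.odd_iff.mp hodd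
  have h1 : k.testBit 1 = false := by
    by_contra hb
    exact hf 0 ⟨by simp [Nat.testBit_zero, h0], by simpa using eq_true_of_ne_false hb⟩
  rw [Nat.testBit_add_one, Nat.testBit_zero] at h1
  simp only [decide_eq_false_iff_not] at h1
  omega

lemma testBit_true_of {c s : ℕ} (h1 : 2 ^ c ≤ s) (h2 : s < 2 ^ (c + 1)) :
    s.testBit c = true := by
  rw [Nat.testBit_eq_decide_div_mod_eq]
  have hd : s / 2 ^ c = 1 := by
    have hpos : 0 < 2 ^ c := Nat.two_pow_pos c
    have h2' : s < 2 ^ c * 2 := by rw [pow_succ] at h2; omega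
    apply Nat.div_eq_of_lt_le <;> omega
  simp [hd]

lemma lt_pow_pred {b s : ℕ} (hb : 1 ≤ b) (hs : s < 2 ^ b) (ht : s.testBit (b - 1) = false) :
    2 * s < 2 ^ b := by
  by_contra h
  push_neg at h
  obtain ⟨b', rfl⟩ := Nat.exists_eq_add_of_le hb
  have hb' : 1 + b' - 1 = b' := by omega
  rw [hb'] at ht
  have h1 : 2 ^ b' ≤ s := by rw [pow_add, pow_one] at h; omega
  rw [testBit_true_of h1 (by rw [Nat.add_comm] at hs; exact hs)] at ht
  simp at ht

lemma H4 {b s : ℕ} (hs : s < 2 ^ b) :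
    IsFibbinary (2 ^ b + s) ↔ (2 * s < 2 ^ b ∧ IsFibbinary s) := by
  have hmlt : ∀ i, b < i → (2 ^ b + s).testBit i = false := by
    intro i hi
    apply Nat.testBit_lt_two_pow
    calc 2 ^ b + s < 2 ^ b + 2 ^ b := by omega
    _ = 2 ^ (b + 1) := by ring
    _ ≤ 2 ^ i := Nat.pow_le_pow_right (by norm_num) hi
  have hsf : ∀ i, b ≤ i → s.testBit i = false := fun i hi =>
    Nat.testBit_lt_two_pow (lt_of_lt_of_le hs (Nat.pow_le_pow_right (by norm_num) hi))
  have hme : (2 ^ b + s).testBit b = true := by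
    rw [Nat.testBit_two_pow_add_eq, hsf b le_rfl]; rfl
  constructor
  · intro h
    constructor
    · rcases Nat.eq_zero_or_pos b with rfl | hb
      · interval_cases s; omega
      · apply lt_pow_pred hb hs
        by_contra hbt
        have hbt' : s.testBit (b-1) = true := eq_true_of_ne_false hbt
        have : (2 ^ b + s).testBit (b-1) = true := by
          rw [Nat.testBit_two_pow_add_gt (by omega)]; exact hbt'
        exact h (b-1) ⟨this, by rw [Nat.sub_add_cancel hb]; exact hme⟩
    · intro i ⟨h1, h2⟩
      have hi1 : i + 1 < b := by
        by_contra hc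
        push_neg at hc
        rw [hsf (i+1) hc] at h2; exact Bool.false_ne_true h2
      refine h i ⟨?_, ?_⟩
      · rw [Nat.testBit_two_pow_add_gt (by omega)]; exact h1
      · rw [Nat.testBit_two_pow_add_gt hi1]; exact h2
  · intro ⟨h2s, hfs⟩ i ⟨h1, h2⟩
    have hs' : s < 2 ^ (b - 1) ∨ b = 0 := by
      rcases Nat.eq_zero_or_pos b with rfl | hb
      · right; rfl
      · left
        obtain ⟨b', rfl⟩ := Nat.exists_eq_add_of_le hb
        have : 2 ^ (1 + b') = 2 * 2 ^ b' := by rw [pow_add]; ring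
        rw [this] at h2s
        have : s < 2 ^ b' := by omega
        simpa using this
    rcases hs' with hs' | rfl
    · -- b ≥ 1 implicitly possible b=0? here b could still be anything with s < 2^(b-1)
      rcases lt_trichotomy (i+1) b with hlt | heq | hgt
      · rw [Nat.testBit_two_pow_add_gt (by omega)] at h1
        rw [Nat.testBit_two_pow_add_gt hlt] at h2
        exact hfs i ⟨h1, h2⟩
      · rw [Nat.testBit_two_pow_add_gt (by omega)] at h1
        have : s.testBit i = false := by
          apply Nat.testBit_lt_two_pow
          apply lt_of_lt_of_le hs'
          apply Nat.pow_le_pow_right (by norm_num); omega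
        rw [this] at h1; exact Bool.false_ne_true h1
      · rw [hmlt (i+1) hgt] at h2; exact Bool.false_ne_true h2
    · simp only [pow_zero] at hs
      interval_cases s
      · match i with
        | 0 => rw [Nat.testBit_add_one] at h2; norm_num at h2
        | (i'+1) =>
          have : (2^0 + 0).testBit (i'+1) = false := by
            apply Nat.testBit_lt_two_pow
            simp [Nat.one_lt_two_pow_iff]
          rw [this] at h1; exact Bool.false_ne_true h1

end OFIAux

namespace OFIAux

open Nat Finset

lemma count_congr' {p q : ℕ → Prop} [DecidablePred p] [DecidablePred q] {n : ℕ}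
    (h : ∀ k < n, (p k ↔ q k)) : Nat.count p n = Nat.count q n := by
  rw [Nat.count_eq_card_filter_range, Nat.count_eq_card_filter_range]
  congr 1
  apply Finset.filter_congr
  intro x hx
  simp only [Finset.mem_range] at hx
  simp [h x hx]

lemma count_lt_and {p : ℕ → Prop} [DecidablePred p] {c n : ℕ} (hcn : c ≤ n) :
    Nat.count (fun k => k < c ∧ p k) n = Nat.count p c := by
  obtain ⟨d, rfl⟩ := Nat.exists_eq_add_of_le hcn
  rw [Nat.count_add]
  have h1 : Nat.count (fun k => k < c ∧ p k) c = Nat.count p c :=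
    count_congr' (fun k hk => by simp [hk])
  have h2 : Nat.count (fun k => c + k < c ∧ p (c + k)) d = 0 := by
    rw [Nat.count_iff_forall_not]
    intro m _ ⟨hm, _⟩; omega
  rw [h1, h2]
  omega

/-- number of fibbinary numbers (including 0) below `n` -/
noncomputable abbrev cAll (n : ℕ) : ℕ := Nat.count IsFibbinary n

lemma C1 {b r : ℕ} (hr : 2 * r < 2 ^ b) :
    cAll (2 ^ b + r) = cAll (2 ^ b) + cAll r := by
  show Nat.count IsFibbinary (2 ^ b + r) = Nat.count IsFibbinary (2 ^ b) + Nat.count IsFibbinary r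
  rw [Nat.count_add]
  congr 1
  apply count_congr'
  intro k hk
  rw [H4 (by omega)]
  constructor
  · exact fun h => h.2
  · intro h; exact ⟨by omega, h⟩

lemma C2 : ∀ b : ℕ, cAll (2 ^ b) = Nat.fib (b + 2) := by
  have key : ∀ b, cAll (2 ^ (b+1)) = cAll (2 ^ b) + Nat.fib (b + 2) → True := fun _ _ => trivial
  intro b
  induction b using Nat.strong_induction_on with
  | _ b ih =>
    match b with
    | 0 =>
      show Nat.count IsFibbinary 1 = 1
      simp [Nat.count_succ, fib_zero]
    | 1 =>
      show Nat.count IsFibbinary 2 = 2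
      simp [show (2:ℕ) = 1+1 by rfl, Nat.count_succ, fib_zero, fib_one]
    | (b + 2) =>
      have hsplit : (2:ℕ) ^ (b + 2) = 2 ^ (b+1) + 2 ^ (b+1) := by ring
      show Nat.count IsFibbinary (2 ^ (b+2)) = _
      rw [hsplit, Nat.count_add]
      have h2 : Nat.count (fun k => IsFibbinary (2 ^ (b+1) + k)) (2 ^ (b+1))
          = Nat.count (fun k => k < 2 ^ b ∧ IsFibbinary k) (2 ^ (b+1)) := by
        apply count_congr'
        intro k hk
        rw [H4 hk]
        have : (2:ℕ) ^ (b+1) = 2 * 2 ^ b := by ring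
        constructor
        · intro ⟨h1, h2⟩; exact ⟨by omega, h2⟩
        · intro ⟨h1, h2⟩; exact ⟨by omega, h2⟩
      rw [h2, count_lt_and (by have := Nat.pow_le_pow_right (show 1 ≤ 2 by norm_num) (show b ≤ b + 1 by omega); omega)]
      have e1 : cAll (2 ^ (b+1)) = Nat.fib (b+3) := ih (b+1) (by omega)
      have e2 : cAll (2 ^ b) = Nat.fib (b+2) := ih b (by omega)
      have e3 : Nat.fib (b+4) = Nat.fib (b+2) + Nat.fib (b+3) := Nat.fib_add_two
      show cAll (2 ^ (b+1)) + cAll (2 ^ b) = Nat.fib (b+4)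
      omega

lemma C3 {t : ℕ} :
    Nat.count (fun k => Odd k ∧ IsFibbinary k) (4 * t + 1) = cAll t := by
  show _ = Nat.count IsFibbinary t
  rw [Nat.count_eq_card_filter_range, Nat.count_eq_card_filter_range]
  refine Finset.card_bij' (fun k _ => k / 4) (fun s _ => 4 * s + 1) ?hi ?hj ?li ?ri
  case hi =>
    intro k hk
    simp only [Finset.mem_filter, Finset.mem_range] at hk ⊢
    obtain ⟨hlt, hodd, hfib⟩ := hk
    have h4 := H3 hodd hfib
    have hk4 : k = 4 * (k / 4) + 1 := by omega
    constructor
    · omega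
    · exact (H2 _).mp (by rw [← hk4]; exact hfib)
  case hj =>
    intro s hs
    simp only [Finset.mem_filter, Finset.mem_range] at hs ⊢
    exact ⟨by omega, ⟨2 * s, by ring⟩, (H2 s).mpr hs.2⟩
  case li =>
    intro k hk
    simp only [Finset.mem_filter, Finset.mem_range] at hk
    have h4 := H3 hk.2.1 hk.2.2
    show 4 * (k / 4) + 1 = k
    omega
  case ri =>
    intro s _
    show (4 * s + 1) / 4 = s
    omega

/-- the Fibonacci-sum of the bit indices -/
def FS (m : ℕ) : ℕ := (m.bitIndices.map (fun i => Nat.fib (i + 2))).sum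

lemma bitIndices_two_pow_add {b r : ℕ} (hr : r < 2 ^ b) :
    (2 ^ b + r).bitIndices = r.bitIndices ++ [b] := by
  have hsorted : List.Pairwise (· < ·) (r.bitIndices ++ [b]) := by
    rw [List.pairwise_append]
    refine ⟨Nat.bitIndices_sorted.pairwise, List.pairwise_singleton _ _, ?_⟩
    intro x hx y hy
    simp only [List.mem_singleton] at hy
    rw [hy]
    have := Nat.two_pow_le_of_mem_bitIndices hx
    by_contra hc
    push_neg at hc
    have : (2:ℕ) ^ b ≤ 2 ^ x := Nat.pow_le_pow_right (by norm_num) hc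
    omega
  have := Nat.bitIndices_sum_map_two_pow (List.sortedLT_iff_pairwise.mpr hsorted)
  rw [List.map_append, List.sum_append] at this
  simp only [List.map_singleton, List.sum_singleton, Nat.twoPowSum_bitIndices] at this
  rw [← this, Nat.add_comm]

lemma C4 : ∀ m : ℕ, IsFibbinary m → cAll m = FS m := by
  intro m
  induction m using Nat.strong_induction_on with
  | _ m ih =>
    intro hm
    rcases Nat.eq_zero_or_pos m with rfl | hpos
    · show Nat.count IsFibbinary 0 = FS 0
      simp [FS, Nat.count_zero]
    · set b := m.log2 with hbdef
      have hb1 : 2 ^ b ≤ m := Nat.log2_self_le (by omega)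
      have hb2 : m < 2 ^ (b + 1) := Nat.lt_log2_self
      set r := m - 2 ^ b with hrdef
      have hm' : m = 2 ^ b + r := by omega
      have hrlt : r < 2 ^ b := by
        have : (2:ℕ) ^ (b+1) = 2 * 2 ^ b := by ring
        omega
      rw [hm'] at hm
      obtain ⟨h2r, hfr⟩ := (H4 hrlt).mp hm
      have hr_lt_m : r < m := by
        have : (0:ℕ) < 2 ^ b := Nat.two_pow_pos b
        omega
      rw [hm', C1 h2r, C2 b, ih r hr_lt_m hfr]
      unfold FS
      rw [bitIndices_two_pow_add hrlt, List.map_append, List.sum_append]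
      simp [Nat.add_comm]

end OFIAux

namespace OFIAux

noncomputable def α : ℝ := (Real.sqrt 5 - 1) / 2

lemma sqrt5_sq : Real.sqrt 5 ^ 2 = 5 := Real.sq_sqrt (by norm_num)

lemma sqrt5_gt : (2:ℝ) < Real.sqrt 5 := by
  nlinarith [sqrt5_sq, Real.sqrt_nonneg 5]

lemma sqrt5_lt : Real.sqrt 5 < 3 := by
  nlinarith [sqrt5_sq, Real.sqrt_nonneg 5]

lemma α_pos : 0 < α := by unfold α; nlinarith [sqrt5_gt]

lemma α_lt_one : α < 1 := by unfold α; nlinarith [sqrt5_lt]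

lemma α_sq : α ^ 2 = 1 - α := by unfold α; nlinarith [sqrt5_sq]

/-- Binet-style recursion -/
lemma fib_real1 : ∀ k : ℕ, (Nat.fib (k+1) : ℝ) = (1 + α) * Nat.fib k + (-α) ^ k := by
  intro k
  induction k with
  | zero => simp
  | succ k ih =>
    have hf : (Nat.fib (k+2) : ℝ) = Nat.fib k + Nat.fib (k+1) := by
      rw [Nat.fib_add_two]; push_cast; ring
    rw [hf]
    linear_combination (-α) * ih + (-(Nat.fib k : ℝ)) * α_sq

lemma fib_real2 (k : ℕ) : (Nat.fib (k+2) : ℝ) = (2 + α) * Nat.fib k + (-α) ^ k := by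
  have h1 := fib_real1 (k+1)
  have h2 := fib_real1 k
  have hs : ((-α):ℝ) ^ (k+1) = (-α) * (-α)^k := by ring
  rw [h2] at h1
  rw [h1, hs]
  linear_combination (Nat.fib k : ℝ) * α_sq

/-- the key identity relating the three list sums -/
lemma list_identity : ∀ L : List ℕ,
    (2 + α) * (L.map (fun i => (Nat.fib (i+2) : ℝ))).sum
      = (L.map (fun i => (Nat.fib (i+4) : ℝ))).sum - (L.map (fun i => ((-α) : ℝ) ^ (i+2))).sum := by
  intro L
  induction L with
  | nil => simp
  | cons x L ih =>
    simp only [List.map_cons, List.sum_cons]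
    have := fib_real2 (x+2)
    have hx : x + 2 + 2 = x + 4 := by ring
    rw [hx] at this
    rw [this]
    linear_combination ih

/-- Bounds on alternating sums of `(-α)^(i+c)` over bit indices of a fibbinary number -/
lemma R2 : ∀ t : ℕ, IsFibbinary t → ∀ c : ℕ,
    -((α ^ (c+1)) * (1 + α)) < (-1:ℝ)^c * ((t.bitIndices.map (fun i => ((-α):ℝ) ^ (i+c))).sum)
    ∧ (-1:ℝ)^c * ((t.bitIndices.map (fun i => ((-α):ℝ) ^ (i+c))).sum) < α ^ c * (1 + α) := by
  intro t
  induction t using Nat.strong_induction_on with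
  | _ t ih =>
    intro hft c
    have hα0 := α_pos
    have hα1 := α_lt_one
    have hαs := α_sq
    have hXc : (0:ℝ) < α ^ c := pow_pos hα0 c
    rcases Nat.eq_zero_or_pos t with rfl | hpos
    · simp only [Nat.bitIndices_zero, List.map_nil, List.sum_nil, mul_zero]
      constructor
      · have : (0:ℝ) < α ^ (c+1) * (1+α) := by positivity
        linarith
      · positivity
    · rcases Nat.even_or_odd t with heven | hodd
      · -- t = 2 * s
        obtain ⟨s, hs⟩ := heven
        have hs2 : t = 2 * s := by omega
        subst hs2
        have hfs : IsFibbinary s := (H1 s).mp hft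
        have ihs := ih s (by omega) hfs (c+1)
        have hmap : ((2*s).bitIndices.map (fun i => ((-α):ℝ) ^ (i+c))).sum
            = (s.bitIndices.map (fun i => ((-α):ℝ) ^ (i+(c+1)))).sum := by
          rw [Nat.bitIndices_two_mul, List.map_map]
          congr 1
          apply List.map_congr_left
          intro i _
          simp only [Function.comp_apply]
          congr 1
          omega
        rw [hmap]
        set S := (s.bitIndices.map (fun i => ((-α):ℝ) ^ (i+(c+1)))).sum with hS
        obtain ⟨ih1, ih2⟩ := ihs
        have hneg : (-1:ℝ)^c * S = -((-1:ℝ)^(c+1) * S) := by ring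
        rw [hneg]
        have hp1 : (α:ℝ) ^ (c+1) = α ^ c * α := by ring
        have hp2 : (α:ℝ) ^ (c+2) = α ^ c * α^2 := by ring
        constructor
        · nlinarith
        · nlinarith
      · -- t odd, so t % 4 = 1, t = 4 * u + 1
        have h41 := H3 hodd hft
        set u := t / 4 with hu
        have ht4 : t = 4 * u + 1 := by omega
        have hfu : IsFibbinary u := (H2 u).mp (ht4 ▸ hft)
        have ihu := ih u (by omega) hfu (c+2)
        have hbits : t.bitIndices = 0 :: (u.bitIndices.map (· + 2)) := by
          rw [ht4, show 4 * u + 1 = 2 * (2 * u) + 1 by ring,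
            Nat.bitIndices_two_mul_add_one, Nat.bitIndices_two_mul, List.map_map]
          congr 1
        have hmap : (t.bitIndices.map (fun i => ((-α):ℝ) ^ (i+c))).sum
            = (-α)^c + (u.bitIndices.map (fun i => ((-α):ℝ) ^ (i+(c+2)))).sum := by
          rw [hbits]
          simp only [List.map_cons, List.sum_cons, List.map_map]
          have h0 : ((-α):ℝ)^(0+c) = (-α)^c := by norm_num
          have h1 : (List.map ((fun i => ((-α):ℝ)^(i+c)) ∘ (· + 2)) u.bitIndices)
              = List.map (fun i => ((-α):ℝ)^(i+(c+2))) u.bitIndices := by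
            apply List.map_congr_left
            intro i _
            simp only [Function.comp_apply]
            rw [show i+2+c = i+(c+2) by omega]
          rw [h0, h1]
        rw [hmap]
        set S := (u.bitIndices.map (fun i => ((-α):ℝ) ^ (i+(c+2)))).sum with hS
        obtain ⟨ih1, ih2⟩ := ihu
        have hsplit : (-1:ℝ)^c * ((-α)^c + S) = α^c + (-1:ℝ)^(c+2) * S := by
          have hcc : ((-1:ℝ))^c * (-α)^c = α^c := by
            rw [← mul_pow]; norm_num
          have h2 : ((-1:ℝ))^c = (-1:ℝ)^(c+2) := by ring
          linear_combination hcc + S * h2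
        rw [hsplit]
        have hkey2 : (α:ℝ)^(c+2) * (1+α) = α^c * α := by
          linear_combination (α^c * α) * hαs
        have hkey3 : (α:ℝ)^(c+2+1) * (1+α) = α^c - α^c * α := by
          linear_combination (α^c * (α^2+1)) * hαs
        have hexp : (α:ℝ)^c * (1+α) = α^c + α^c * α := by ring
        have hpos4 : (0:ℝ) < α^(c+1) * (1+α) := by positivity
        have hposa : (0:ℝ) < α^c * α := by positivity
        constructor
        · linarith
        · linarith

end OFIAux

namespace OFIAux

lemma fib_two_pow (k : ℕ) : IsFibbinary (2 ^ k) := by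
  intro i ⟨h1, h2⟩
  rcases eq_or_ne k i with rfl | hne
  · rw [Nat.testBit_two_pow_of_ne (by omega)] at h2
    exact Bool.false_ne_true h2
  · rw [Nat.testBit_two_pow_of_ne hne] at h1
    exact Bool.false_ne_true h1

lemma inf_p : {m : ℕ | 0 < m ∧ IsFibbinary m}.Infinite := by
  apply Set.infinite_of_injective_forall_mem (f := fun k : ℕ => 2 ^ k)
    (fun a b hab => Nat.pow_right_injective (le_refl 2) hab)
  intro k
  exact ⟨Nat.two_pow_pos k, fib_two_pow k⟩

lemma inf_q : {m : ℕ | Odd m ∧ IsFibbinary m}.Infinite := by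
  have hinj : Function.Injective (fun k : ℕ => 4 * 2 ^ (2 * k) + 1) := by
    intro a b hab
    simp only [Nat.add_left_inj, Nat.mul_right_inj (by norm_num : (4:ℕ) ≠ 0)] at hab
    have := Nat.pow_right_injective (le_refl 2) hab
    omega
  apply Set.infinite_of_injective_forall_mem hinj
  intro k
  exact ⟨⟨2 * 2 ^ (2 * k), by ring⟩, (H2 _).mpr (fib_two_pow _)⟩

lemma bitIndices4 (t : ℕ) : (4 * t + 1).bitIndices = 0 :: (t.bitIndices.map (· + 2)) := by
  rw [show 4 * t + 1 = 2 * (2 * t) + 1 by ring,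
    Nat.bitIndices_two_mul_add_one, Nat.bitIndices_two_mul, List.map_map]
  congr 1

lemma count_pos_fib {N : ℕ} (hN : 0 < N) :
    Nat.count (fun k => 0 < k ∧ IsFibbinary k) N + 1 = cAll N := by
  obtain ⟨M, rfl⟩ : ∃ M, N = 1 + M := ⟨N - 1, by omega⟩
  show Nat.count _ (1 + M) + 1 = Nat.count IsFibbinary (1 + M)
  rw [Nat.count_add, Nat.count_add]
  have h1 : Nat.count (fun k => 0 < k ∧ IsFibbinary k) 1 = 0 := by
    rw [Nat.count_one]; simp
  have h2 : Nat.count IsFibbinary 1 = 1 := by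
    rw [Nat.count_one]; simp [fib_zero]
  have h3 : Nat.count (fun k => 0 < 1 + k ∧ IsFibbinary (1 + k)) M
      = Nat.count (fun k => IsFibbinary (1 + k)) M := by
    apply count_congr'
    intro k _
    simp [Nat.succ_pos]
  rw [h1, h2, h3]
  omega

lemma FS4 (t : ℕ) : FS (4 * t + 1) = 1 + (t.bitIndices.map (fun i => Nat.fib (i + 4))).sum := by
  unfold FS
  rw [bitIndices4]
  simp only [List.map_cons, List.sum_cons, List.map_map]
  have h2 : (List.map ((fun i => Nat.fib (i + 2)) ∘ (· + 2)) t.bitIndices)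
      = List.map (fun i => Nat.fib (i + 4)) t.bitIndices := by
    apply List.map_congr_left
    intro i _
    simp only [Function.comp_apply]
  rw [h2]
  have hf2 : Nat.fib (0 + 2) = 1 := by decide
  omega

end OFIAux

/-- `fibbin n` is the `n`-th fibbinary number, i.e. the `n`-th positive integer
(1-indexed, in increasing order) whose binary representation has no two
consecutive ones. -/
noncomputable def fibbin (n : ℕ) : ℕ :=
  Nat.nth (fun m => 0 < m ∧ IsFibbinary m) (n - 1)

/-- `odfib n` is the `n`-th odd fibbinary number
(1-indexed, in increasing order). -/
noncomputable def odfib (n : ℕ) : ℕ :=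
  Nat.nth (fun m => Odd m ∧ IsFibbinary m) (n - 1)

/-- `Z n` is the index `j` such that the `j`-th fibbinary number equals the
`n`-th odd fibbinary number, i.e. `Z n = fibbin⁻¹ (odfib n)`. -/
noncomputable def Z (n : ℕ) : ℕ :=
  sInf {j : ℕ | 1 ≤ j ∧ fibbin j = odfib n}

open OFIAux in
/-- If the `j`-th fibbinary number is the `n`-th *odd* fibbinary number, then
`j = ⌊n·φ²⌋ − 1`, where `φ = (1+√5)/2` is the golden ratio; equivalently
`Z n = ⌊n·φ²⌋ − 1` for every `n ≥ 1`. -/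
theorem odd_fibbinary_index (n j : ℕ) (hn : 1 ≤ n) (hj : 1 ≤ j)
    (h : fibbin j = odfib n) :
    (j : ℤ) = ⌊(n : ℝ) * ((1 + Real.sqrt 5) / 2) ^ 2⌋ - 1 ∧
    (Z n : ℤ) = ⌊(n : ℝ) * ((1 + Real.sqrt 5) / 2) ^ 2⌋ - 1 := by
  have hip : {m : ℕ | 0 < m ∧ IsFibbinary m}.Infinite := inf_p
  have hiq : {m : ℕ | Odd m ∧ IsFibbinary m}.Infinite := inf_q
  have hqm : Odd (odfib n) ∧ IsFibbinary (odfib n) :=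
    Nat.nth_mem_of_infinite hiq (n - 1)
  have hcq : Nat.count (fun m => Odd m ∧ IsFibbinary m) (odfib n) = n - 1 :=
    Nat.count_nth_of_infinite hiq (n - 1)
  have hpm : 0 < odfib n ∧ IsFibbinary (odfib n) := by
    rw [← h]; exact Nat.nth_mem_of_infinite hip (j - 1)
  have hcp : Nat.count (fun m => 0 < m ∧ IsFibbinary m) (odfib n) = j - 1 := by
    rw [← h]; exact Nat.count_nth_of_infinite hip (j - 1)
  have hmpos : 0 < odfib n := hpm.1
  have h41 : odfib n % 4 = 1 := H3 hqm.1 hqm.2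
  set t := odfib n / 4 with ht
  have hm4 : odfib n = 4 * t + 1 := by omega
  have hft : IsFibbinary t := (H2 t).mp (by rw [← hm4]; exact hqm.2)
  have hjc : j = cAll (odfib n) := by
    have h1 := count_pos_fib hmpos
    rw [hcp] at h1
    omega
  have hnc : n = cAll t + 1 := by
    have h3 : Nat.count (fun k => Odd k ∧ IsFibbinary k) (4 * t + 1) = cAll t := C3
    rw [← hm4, hcq] at h3
    omega
  have hjF : j = FS (4 * t + 1) := by
    rw [hjc, hm4]
    exact C4 _ (hm4 ▸ hpm.2)
  have hnF : n = FS t + 1 := by rw [hnc, C4 t hft]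
  have hjsum : j = 1 + (t.bitIndices.map (fun i => Nat.fib (i + 4))).sum := by
    rw [hjF, FS4]
  have hnsum : n = 1 + (t.bitIndices.map (fun i => Nat.fib (i + 2))).sum := by
    rw [hnF]; unfold FS; omega
  -- real versions
  have hcast : ∀ f : ℕ → ℕ,
      (((t.bitIndices.map f).sum : ℕ) : ℝ) = (t.bitIndices.map (fun i => (f i : ℝ))).sum := by
    intro f
    rw [Nat.cast_list_sum, List.map_map]
    rfl
  have hjr : (j : ℝ) = 1 + (t.bitIndices.map (fun i => (Nat.fib (i + 4) : ℝ))).sum := by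
    rw [hjsum, Nat.cast_add, Nat.cast_one, hcast]
  have hnr : (n : ℝ) = 1 + (t.bitIndices.map (fun i => (Nat.fib (i + 2) : ℝ))).sum := by
    rw [hnsum, Nat.cast_add, Nat.cast_one, hcast]
  have hid := list_identity t.bitIndices
  have hbnd := R2 t hft 2
  norm_num at hbnd
  obtain ⟨hb1, hb2⟩ := hbnd
  have hαs := α_sq
  have hub : (t.bitIndices.map (fun i => ((-α) : ℝ) ^ (i + 2))).sum < α := by
    have he : α ^ 2 * (1 + α) = α := by linear_combination α * hαs
    linarith
  have hlb : α - 1 < (t.bitIndices.map (fun i => ((-α) : ℝ) ^ (i + 2))).sum := by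
    have he : α ^ 3 * (1 + α) = 1 - α := by linear_combination (α ^ 2 + 1) * hαs
    linarith
  have hsq : ((1 + Real.sqrt 5) / 2) ^ 2 = 2 + α := by
    unfold OFIAux.α
    linear_combination (1 / 4 : ℝ) * sqrt5_sq
  have hnval : (n : ℝ) * (2 + α)
      = (j : ℝ) + 1 + (α - (t.bitIndices.map (fun i => ((-α) : ℝ) ^ (i + 2))).sum) := by
    rw [hnr, hjr]
    linear_combination hid
  have hfloor : ⌊(n : ℝ) * ((1 + Real.sqrt 5) / 2) ^ 2⌋ = (j : ℤ) + 1 := by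
    rw [hsq, Int.floor_eq_iff]
    constructor
    · push_cast
      linarith
    · push_cast
      linarith
  refine ⟨by rw [hfloor]; ring, ?_⟩
  have hset : {j' : ℕ | 1 ≤ j' ∧ fibbin j' = odfib n} = {j} := by
    ext j'
    simp only [Set.mem_setOf_eq, Set.mem_singleton_iff]
    constructor
    · rintro ⟨hj', heq⟩
      have heq2 : fibbin j' = fibbin j := heq.trans h.symm
      have h2 := Nat.nth_injective hip heq2
      omega
    · rintro rfl
      exact ⟨hj, h⟩
  show ((sInf {j' : ℕ | 1 ≤ j' ∧ fibbin j' = odfib n} : ℕ) : ℤ) = _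
  rw [hset, csInf_singleton, hfloor]
  ring
end

section
/- For every positive integer n, Z(n) = ⌊n·φ⌋ + n − 1, where φ = (1+√5)/2 is the golden ratio. -/
open goldenRatio Real

-- basic testBit lemmas
lemma tb_even_zero (m : ℕ) : (2*m).testBit 0 = false := by
  simp [Nat.testBit_zero, Nat.mul_mod_right]

lemma tb_even_succ (m i : ℕ) : (2*m).testBit (i+1) = m.testBit i := by
  rw [Nat.testBit_succ]
  congr 1
  omega

lemma tb_odd_zero (m : ℕ) : (2*m+1).testBit 0 = true := by
  simp [Nat.testBit_zero, Nat.mul_add_mod]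

lemma tb_odd_succ (m i : ℕ) : (2*m+1).testBit (i+1) = m.testBit i := by
  rw [Nat.testBit_succ]
  congr 1
  omega

instance : DecidablePred IsFibbinary := fun m =>
  decidable_of_iff (m &&& (m / 2) = 0) (by
    constructor
    · intro h i hi
      have := congrArg (fun x => x.testBit i) h
      simp only [Nat.testBit_and, Nat.testBit_div_two, Nat.zero_testBit] at this
      rw [hi.1, hi.2] at this
      simp at this
    · intro h
      apply Nat.eq_of_testBit_eq
      intro i
      simp only [Nat.testBit_and, Nat.testBit_div_two, Nat.zero_testBit]
      have := h i
      rcases Bool.eq_false_or_eq_true (m.testBit i) with h1 | h1 <;>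
        rcases Bool.eq_false_or_eq_true (m.testBit (i+1)) with h2 | h2 <;>
        simp [h1, h2] at this ⊢)

lemma fibb_zero : IsFibbinary 0 := by intro i hi; simp at hi

lemma fibb_two_mul {m : ℕ} : IsFibbinary (2*m) ↔ IsFibbinary m := by
  constructor
  · intro h i hi
    exact h (i+1) ⟨by rw [tb_even_succ]; exact hi.1, by rw [tb_even_succ]; exact hi.2⟩
  · intro h i hi
    cases i with
    | zero => rw [tb_even_zero] at hi; simp at hi
    | succ j => rw [tb_even_succ, tb_even_succ] at hi; exact h j hi

lemma fibb_two_mul_add_one {m : ℕ} :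
    IsFibbinary (2*m+1) ↔ IsFibbinary m ∧ Even m := by
  constructor
  · intro h
    constructor
    · intro i hi
      exact h (i+1) ⟨by rw [tb_odd_succ]; exact hi.1, by rw [tb_odd_succ]; exact hi.2⟩
    · have := h 0
      rw [tb_odd_zero, tb_odd_succ] at this
      have hm0 : m.testBit 0 = false := by
        rcases Bool.eq_false_or_eq_true (m.testBit 0) with h1 | h1
        · exact absurd ⟨rfl, h1⟩ this
        · exact h1
      simp only [Nat.testBit_zero, decide_eq_false_iff_not] at hm0
      rw [Nat.even_iff]
      omega
  · rintro ⟨h, hev⟩ i hi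
    cases i with
    | zero =>
      rw [tb_odd_succ] at hi
      have : m.testBit 0 = true := hi.2
      simp only [Nat.testBit_zero, decide_eq_true_eq] at this
      rw [Nat.even_iff] at hev
      omega
    | succ j => rw [tb_odd_succ, tb_odd_succ] at hi; exact h j hi
-- v n = Σ fib(i+2) over set bits, w n = Σ fib(i+1), u n = Σ fib(i)
def t : ℕ → ℕ × ℕ × ℕ
  | 0 => (0, 0, 0)
  | (n+1) =>
    let p := t ((n+1)/2)
    ((n+1) % 2 + p.1 + p.2.1, (n+1) % 2 + p.1, p.2.1)
decreasing_by exact Nat.div_lt_self (Nat.succ_pos n) one_lt_two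

def v (n : ℕ) : ℕ := (t n).1
def w (n : ℕ) : ℕ := (t n).2.1
def u (n : ℕ) : ℕ := (t n).2.2

lemma t_eq (n : ℕ) :
    t n = (n % 2 + (t (n/2)).1 + (t (n/2)).2.1, n % 2 + (t (n/2)).1, (t (n/2)).2.1) := by
  cases n with
  | zero => simp [t]
  | succ k => rw [t]

lemma v_eq (n : ℕ) : v n = n % 2 + v (n/2) + w (n/2) := by
  unfold v w; rw [t_eq n]
lemma w_eq (n : ℕ) : w n = n % 2 + v (n/2) := by
  unfold v w; rw [t_eq n]
lemma u_eq (n : ℕ) : u n = w (n/2) := by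
  unfold u w; rw [t_eq n]

lemma v_two_mul (m : ℕ) : v (2*m) = v m + w m := by
  rw [v_eq]; simp [Nat.mul_div_cancel_left, Nat.mul_mod_right]
lemma w_two_mul (m : ℕ) : w (2*m) = v m := by
  rw [w_eq]; simp [Nat.mul_div_cancel_left, Nat.mul_mod_right]
lemma u_two_mul (m : ℕ) : u (2*m) = w m := by
  rw [u_eq]; simp [Nat.mul_div_cancel_left]
lemma v_odd (m : ℕ) : v (2*m+1) = 1 + v m + w m := by
  rw [v_eq]
  have h1 : (2*m+1) % 2 = 1 := by omega
  have h2 : (2*m+1) / 2 = m := by omega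
  rw [h1, h2]
lemma w_odd (m : ℕ) : w (2*m+1) = 1 + v m := by
  rw [w_eq]
  have h1 : (2*m+1) % 2 = 1 := by omega
  have h2 : (2*m+1) / 2 = m := by omega
  rw [h1, h2]
lemma u_odd (m : ℕ) : u (2*m+1) = w m := by
  rw [u_eq]
  have h2 : (2*m+1) / 2 = m := by omega
  rw [h2]

lemma v_eq_u_add_w (n : ℕ) : v n = u n + w n := by
  rw [v_eq n, u_eq n, w_eq n]; ring

lemma v_zero : v 0 = 0 := by simp [v, t]
lemma u_zero : u 0 = 0 := by simp [u, t]

noncomputable def r : ℕ → ℝ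
  | 0 => 0
  | (n+1) => ((n+1) % 2 : ℕ) + ψ * r ((n+1)/2)
decreasing_by exact Nat.div_lt_self (Nat.succ_pos n) one_lt_two

lemma r_eq (n : ℕ) : r n = ((n % 2 : ℕ) : ℝ) + ψ * r (n/2) := by
  cases n with
  | zero => simp [r]
  | succ k => rw [r]

lemma r_zero : r 0 = 0 := by simp [r]

lemma r_bounds : ∀ n, IsFibbinary n → -1 < r n ∧ r n < φ := by
  intro n
  induction n using Nat.strong_induction_on with
  | _ n ih =>
    intro hn
    have hψ : ψ < 0 := goldenConj_neg
    have hφ : 1 < φ := one_lt_goldenRatio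
    have hmul : φ * ψ = -1 := goldenRatio_mul_goldenConj
    have hadd : φ + ψ = 1 := goldenRatio_add_goldenConj
    rcases Nat.eq_zero_or_pos n with rfl | hpos
    · rw [r_zero]; constructor <;> nlinarith
    rcases Nat.even_or_odd n with he | ho
    · -- n = 2*m, m ≥ 1
      obtain ⟨m, hm⟩ := he
      have hm2 : n = 2*m := by omega
      subst hm2
      have hfm : IsFibbinary m := fibb_two_mul.mp hn
      have ihm := ih m (by omega) hfm
      have hr : r (2*m) = ψ * r m := by
        rw [r_eq]
        have h1 : (2*m) % 2 = 0 := by omega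
        have h2 : (2*m) / 2 = m := by omega
        rw [h1, h2]; simp
      rw [hr]
      constructor <;> nlinarith [ihm.1, ihm.2]
    · -- n odd: n = 2*j+1 with j even fibbinary
      obtain ⟨j, hj⟩ := ho
      subst hj
      obtain ⟨hfj, hevj⟩ := fibb_two_mul_add_one.mp hn
      obtain ⟨m, hm⟩ := hevj
      have hm2 : j = 2*m := by omega
      subst hm2
      have hfm : IsFibbinary m := fibb_two_mul.mp hfj
      have ihm := ih m (by omega) hfm
      have hrj : r (2*m) = ψ * r m := by
        rw [r_eq]
        have h1 : (2*m) % 2 = 0 := by omega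
        have h2 : (2*m) / 2 = m := by omega
        rw [h1, h2]; simp
      have hr : r (2*(2*m)+1) = 1 + ψ * (ψ * r m) := by
        rw [r_eq]
        have h1 : (2*(2*m)+1) % 2 = 1 := by omega
        have h2 : (2*(2*m)+1) / 2 = 2*m := by omega
        rw [h1, h2, hrj]; norm_num
      rw [hr]
      have hψψ : ψ * ψ = ψ + 1 := by have := goldenConj_sq; nlinarith [this]
      have hψ1 : -1 < ψ := neg_one_lt_goldenConj
      have hp : (0:ℝ) < ψ + 1 := by linarith
      constructor
      · nlinarith [mul_lt_mul_of_pos_left ihm.1 hp]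
      · nlinarith [mul_lt_mul_of_pos_left ihm.2 hp]

lemma v_link : ∀ n, (v n : ℝ) = φ * w n + ψ * r n := by
  intro n
  induction n using Nat.strong_induction_on with
  | _ n ih =>
    rcases Nat.eq_zero_or_pos n with rfl | hpos
    · rw [v_zero, r_zero]
      have : w 0 = 0 := by simp [w, t]
      rw [this]; simp
    have ihh := ih (n/2) (by omega)
    have hmul : φ * ψ = -1 := goldenRatio_mul_goldenConj
    have hadd : φ + ψ = 1 := goldenRatio_add_goldenConj
    rw [v_eq n, w_eq n, r_eq n]
    push_cast
    have h5 : √5 ^ 2 = 5 := Real.sq_sqrt (by norm_num)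
    linear_combination ψ * ihh + ((n % 2 : ℕ) + (v (n/2) : ℝ)) * hadd
      - (w (n/2) : ℝ) * hmul + (-(w (n/2) : ℝ)/2) * h5

lemma v2_link (n : ℕ) : (v (2*n) : ℝ) = φ * v n + ψ * (ψ * r n) := by
  have h1 := v_link n
  have hmul : φ * ψ = -1 := goldenRatio_mul_goldenConj
  have hadd : φ + ψ = 1 := goldenRatio_add_goldenConj
  rw [v_two_mul]
  push_cast
  linear_combination ψ * h1 - (v n : ℝ) * hadd + (w n : ℝ) * hmul

lemma beatty {m : ℕ} (hm : IsFibbinary m) :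
    ⌊((v m : ℝ) + 1) * φ⌋ = (v (2*m) : ℤ) + 1 := by
  have hb := r_bounds m hm
  have hl := v2_link m
  have hψ : ψ < 0 := goldenConj_neg
  have hφ : 1 < φ := one_lt_goldenRatio
  have hmul : φ * ψ = -1 := goldenRatio_mul_goldenConj
  have hadd : φ + ψ = 1 := goldenRatio_add_goldenConj
  have hψψ : ψ * ψ = ψ + 1 := by have := goldenConj_sq; nlinarith [this]
  have hp : (0:ℝ) < ψ + 1 := by nlinarith [neg_one_lt_goldenConj]
  -- bounds for ψ² r m
  have hub : ψ * (ψ * r m) < φ - 1 := by nlinarith [mul_lt_mul_of_pos_left hb.2 hp]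
  have hlb : φ - 2 < ψ * (ψ * r m) := by nlinarith [mul_lt_mul_of_pos_left hb.1 hp]
  rw [Int.floor_eq_iff]
  constructor
  · push_cast
    nlinarith [hl, hlb]
  · push_cast
    nlinarith [hl, hub]

-- count abbreviations
def cc (n : ℕ) : ℕ := Nat.count IsFibbinary n
def dd (n : ℕ) : ℕ := Nat.count (fun m => Odd m ∧ IsFibbinary m) n
def ee (n : ℕ) : ℕ := Nat.count (fun m => Even m ∧ IsFibbinary m) n

lemma cc_split (n : ℕ) : cc n = dd n + ee n := by
  induction n with
  | zero => simp [cc, dd, ee]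
  | succ k ih =>
    unfold cc dd ee at *
    rw [Nat.count_succ, Nat.count_succ, Nat.count_succ]
    rcases Nat.even_or_odd k with he | ho
    · have hno : ¬ Odd k := by simp [Nat.not_odd_iff_even, he]
      by_cases hf : IsFibbinary k <;> simp [hf, he, hno, ih] <;> omega
    · have hne : ¬ Even k := by simp [Nat.not_even_iff_odd, ho]
      by_cases hf : IsFibbinary k <;> simp [hf, ho, hne, ih] <;> omega

lemma ee_two_mul (n : ℕ) : ee (2*n) = cc n := by
  unfold cc ee
  rw [Nat.count_eq_card_filter_range, Nat.count_eq_card_filter_range]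
  apply Finset.card_nbij' (fun k => k / 2) (fun q => 2 * q)
  · intro k hk
    simp only [Finset.mem_coe, Finset.mem_filter, Finset.mem_range] at hk ⊢
    obtain ⟨hk1, ⟨q, hq⟩, hk3⟩ := hk
    have hkq : k = 2*q := by omega
    subst hkq
    have h2 : 2*q/2 = q := by omega
    rw [h2]
    exact ⟨by omega, fibb_two_mul.mp hk3⟩
  · intro q hq
    simp only [Finset.mem_coe, Finset.mem_filter, Finset.mem_range] at hq ⊢
    exact ⟨by omega, ⟨q, by omega⟩, fibb_two_mul.mpr hq.2⟩
  · intro k hk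
    simp only [Finset.mem_coe, Finset.mem_filter, Finset.mem_range] at hk
    obtain ⟨hk1, ⟨q, hq⟩, hk3⟩ := hk
    dsimp only
    omega
  · intro q hq
    dsimp only
    omega

lemma dd_two_mul (n : ℕ) : dd (2*n) = ee n := by
  unfold dd ee
  rw [Nat.count_eq_card_filter_range, Nat.count_eq_card_filter_range]
  apply Finset.card_nbij' (fun k => k / 2) (fun q => 2 * q + 1)
  · intro k hk
    simp only [Finset.mem_coe, Finset.mem_filter, Finset.mem_range] at hk ⊢
    obtain ⟨hk1, ⟨q, hq⟩, hk3⟩ := hk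
    have hkq : k = 2*q+1 := by omega
    subst hkq
    have h2 : (2*q+1)/2 = q := by omega
    rw [h2]
    have := fibb_two_mul_add_one.mp hk3
    exact ⟨by omega, this.2, this.1⟩
  · intro q hq
    simp only [Finset.mem_coe, Finset.mem_filter, Finset.mem_range] at hq ⊢
    exact ⟨by omega, ⟨q, by omega⟩, fibb_two_mul_add_one.mpr ⟨hq.2.2, hq.2.1⟩⟩
  · intro k hk
    simp only [Finset.mem_coe, Finset.mem_filter, Finset.mem_range] at hk
    obtain ⟨hk1, ⟨q, hq⟩, hk3⟩ := hk
    dsimp only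
    omega
  · intro q hq
    dsimp only
    omega

lemma cc_two_mul (n : ℕ) : cc (2*n) = cc n + ee n := by
  rw [cc_split (2*n), dd_two_mul, ee_two_mul]
  omega

lemma main_count : ∀ x, IsFibbinary x → cc x = v x ∧ dd x = u x := by
  intro x
  induction x using Nat.strong_induction_on with
  | _ x ih =>
    intro hx
    rcases Nat.eq_zero_or_pos x with rfl | hpos
    · refine ⟨?_, ?_⟩ <;> simp [cc, dd, v_zero, u_zero, Nat.count_zero]
    rcases Nat.even_or_odd x with he | ho
    · obtain ⟨m, hm⟩ := he
      have hm2 : x = 2*m := by omega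
      subst hm2
      have hfm : IsFibbinary m := fibb_two_mul.mp hx
      have IH := ih m (by omega) hfm
      have hee : ee m = w m := by
        have h1 := cc_split m
        have h2 := v_eq_u_add_w m
        omega
      constructor
      · rw [cc_two_mul, IH.1, hee, v_two_mul]
      · rw [dd_two_mul, hee, u_two_mul]
    · obtain ⟨j, hj⟩ := ho
      subst hj
      obtain ⟨hfj, _⟩ := fibb_two_mul_add_one.mp hx
      have IH := ih (2*j) (by omega) (fibb_two_mul.mpr hfj)
      have IHj := ih j (by omega) hfj
      have hee : ee j = w j := by
        have h1 := cc_split j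
        have h2 := v_eq_u_add_w j
        omega
      constructor
      · show cc (2*j+1) = v (2*j+1)
        rw [v_odd]
        unfold cc
        rw [Nat.count_succ, if_pos (fibb_two_mul.mpr hfj)]
        have : Nat.count IsFibbinary (2*j) = cc j + ee j := cc_two_mul j
        omega
      · show dd (2*j+1) = u (2*j+1)
        rw [u_odd]
        unfold dd
        rw [Nat.count_succ, if_neg (by rintro ⟨⟨q, hq⟩, -⟩; omega)]
        have : Nat.count (fun m => Odd m ∧ IsFibbinary m) (2*j) = ee j := dd_two_mul j
        omega

lemma fibb_pow4 (k : ℕ) : IsFibbinary (4^k) := by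
  induction k with
  | zero =>
    have h1 : (4:ℕ)^0 = 2*0+1 := rfl
    rw [h1]
    exact fibb_two_mul_add_one.mpr ⟨fibb_zero, Even.zero⟩
  | succ j ih =>
    have : (4:ℕ)^(j+1) = 2*(2*4^j) := by ring
    rw [this]
    exact fibb_two_mul.mpr (fibb_two_mul.mpr ih)

lemma S_infinite : {m : ℕ | 0 < m ∧ IsFibbinary m}.Infinite := by
  apply Set.infinite_of_injective_forall_mem (f := fun k : ℕ => 4^k)
    (hi := fun a b hab => Nat.pow_right_injective (by norm_num) hab)
  intro k
  exact ⟨Nat.pow_pos (by norm_num), fibb_pow4 k⟩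

lemma T_infinite : {m : ℕ | Odd m ∧ IsFibbinary m}.Infinite := by
  apply Set.infinite_of_injective_forall_mem (f := fun k : ℕ => 2*(2*4^k)+1)
    (hi := by
      intro a b hab
      have h : 2*(2*4^a)+1 = 2*(2*4^b)+1 := hab
      have h2 : (4:ℕ)^a = 4^b := by omega
      exact Nat.pow_right_injective (show 2 ≤ 4 by norm_num) h2)
  intro k
  refine ⟨⟨2*4^k, by ring⟩, fibb_two_mul_add_one.mpr ⟨fibb_two_mul.mpr (fibb_pow4 k), ⟨4^k, by ring⟩⟩⟩

lemma odd_fibb_struct {x : ℕ} (h1 : Odd x) (h2 : IsFibbinary x) :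
    ∃ m, IsFibbinary m ∧ x = 4*m+1 := by
  obtain ⟨j, hj⟩ := h1
  subst hj
  obtain ⟨hfj, ⟨m, hm⟩⟩ := fibb_two_mul_add_one.mp h2
  have hjm : j = 2*m := by omega
  subst hjm
  exact ⟨m, fibb_two_mul.mp hfj, by ring⟩

lemma count_S (x : ℕ) (hx : 0 < x) :
    Nat.count (fun m => 0 < m ∧ IsFibbinary m) x + 1 = cc x := by
  induction x with
  | zero => omega
  | succ k ih =>
    unfold cc at *
    rw [Nat.count_succ, Nat.count_succ]
    rcases Nat.eq_zero_or_pos k with rfl | hk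
    · simp [fibb_zero, Nat.count_zero]
    · have := ih hk
      by_cases hf : IsFibbinary k <;> simp [hf, hk] <;> omega

/-- For every positive integer `n`, `Z n = ⌊n·φ⌋ + n − 1`,
where `φ = (1+√5)/2` is the golden ratio. -/
theorem Z_eq_floor_phi_add (n : ℕ) (hn : 1 ≤ n) :
    (Z n : ℤ) = ⌊(n : ℝ) * ((1 + Real.sqrt 5) / 2)⌋ + (n : ℤ) - 1 := by
  have hxT : Odd (odfib n) ∧ IsFibbinary (odfib n) :=
    Nat.nth_mem_of_infinite T_infinite (n-1)
  have hcnt : Nat.count (fun m => Odd m ∧ IsFibbinary m) (odfib n) = n - 1 :=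
    Nat.count_nth_of_infinite T_infinite (n-1)
  obtain ⟨m, hm, hx⟩ := odd_fibb_struct hxT.1 hxT.2
  have hfib4 : IsFibbinary (4*m+1) := hx ▸ hxT.2
  have hmain := main_count (4*m+1) hfib4
  have h41 : 4*m+1 = 2*(2*m)+1 := by ring
  have hu : u (4*m+1) = v m := by rw [h41, u_odd, w_two_mul]
  have hdd : dd (4*m+1) = n - 1 := by
    show Nat.count (fun m => Odd m ∧ IsFibbinary m) (4*m+1) = n - 1
    rw [← hx]; exact hcnt
  have hvm : v m = n - 1 := by rw [← hu, ← hmain.2, hdd]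
  have hv4 : cc (4*m+1) = 1 + v (2*m) + v m := by
    rw [hmain.1, h41, v_odd, w_two_mul]
  have hcS : Nat.count (fun m => 0 < m ∧ IsFibbinary m) (4*m+1) + 1 = cc (4*m+1) :=
    count_S _ (by omega)
  have hfb : fibbin (cc (4*m+1)) = 4*m+1 := by
    show Nat.nth (fun m => 0 < m ∧ IsFibbinary m) (cc (4*m+1) - 1) = 4*m+1
    have h1 : cc (4*m+1) - 1 = Nat.count (fun m => 0 < m ∧ IsFibbinary m) (4*m+1) := by
      omega
    rw [h1]
    exact Nat.nth_count ⟨by omega, hfib4⟩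
  have hset : {j : ℕ | 1 ≤ j ∧ fibbin j = odfib n} = {cc (4*m+1)} := by
    ext j
    simp only [Set.mem_setOf_eq, Set.mem_singleton_iff]
    constructor
    · rintro ⟨hj1, hj2⟩
      have heq : Nat.nth (fun m => 0 < m ∧ IsFibbinary m) (j-1)
          = Nat.nth (fun m => 0 < m ∧ IsFibbinary m) (cc (4*m+1) - 1) := by
        show fibbin j = fibbin (cc (4*m+1))
        rw [hj2, hfb, hx]
      have := Nat.nth_injective S_infinite heq
      omega
    · rintro rfl
      exact ⟨by omega, by rw [hfb, hx]⟩
  have hZ : Z n = cc (4*m+1) := by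
    show sInf {j : ℕ | 1 ≤ j ∧ fibbin j = odfib n} = cc (4*m+1)
    rw [hset, csInf_singleton]
  have hbt := beatty hm
  have hcast : ((v m : ℝ) + 1) = (n : ℝ) := by
    have h2 : v m + 1 = n := by omega
    exact_mod_cast congrArg (fun k : ℕ => (k : ℝ)) h2
  rw [hcast] at hbt
  have hφeq : (n:ℝ) * ((1 + Real.sqrt 5)/2) = (n:ℝ) * φ := rfl
  rw [hZ, hφeq, hbt]
  have h2 : cc (4*m+1) = 1 + v (2*m) + (n-1) := by omega
  push_cast [h2]
  omega
end

section
/- For every integer n ≥ 2 and every integer k with 1 ≤ k ≤ F_{n−1}, one has odfib(F_n + k) = 2^n + odfib(k), where F_m denotes the m-th Fibonacci number. -/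
namespace OdfibAux

def P : ℕ → Prop := fun m => Odd m ∧ IsFibbinary m

lemma tb_shift {n t : ℕ} (ht : t < 2 ^ n) (i : ℕ) :
    (2 ^ n + t).testBit i = if i = n then true else t.testBit i := by
  rcases lt_trichotomy i n with h | h | h
  · rw [if_neg h.ne, Nat.testBit_two_pow_add_gt h]
  · subst h
    rw [if_pos rfl, Nat.testBit_two_pow_add_eq, Nat.testBit_lt_two_pow ht]
    rfl
  · rw [if_neg h.ne']
    rw [Nat.testBit_lt_two_pow, Nat.testBit_lt_two_pow]
    · exact ht.trans (Nat.pow_lt_pow_right one_lt_two h)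
    · calc 2 ^ n + t < 2 ^ n + 2 ^ n := by omega
        _ = 2 ^ (n + 1) := by ring
        _ ≤ 2 ^ i := Nat.pow_le_pow_right (by norm_num) h

lemma shift {n t : ℕ} (hn : 2 ≤ n) (ht : t < 2 ^ (n - 1)) :
    P (2 ^ n + t) ↔ P t := by
  have htn : t < 2 ^ n := ht.trans_le (Nat.pow_le_pow_right (by norm_num) (by omega))
  have hodd : Odd (2 ^ n + t) ↔ Odd t := by
    have h2 : (2 : ℕ) ^ n % 2 = 0 := by
      rw [Nat.pow_mod]
      simp [Nat.zero_pow (show 0 < n by omega)]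
    rw [Nat.odd_iff, Nat.odd_iff, Nat.add_mod, h2, Nat.zero_add, Nat.mod_mod_of_dvd _ (dvd_refl 2)]
  constructor
  · rintro ⟨h1, h2⟩
    refine ⟨hodd.mp h1, fun i ⟨ha, hb⟩ => ?_⟩
    have hi : i + 1 < n := by
      by_contra h
      have : t.testBit (i + 1) = false :=
        Nat.testBit_lt_two_pow (ht.trans_le (Nat.pow_le_pow_right (by norm_num) (by omega)))
      rw [this] at hb; exact absurd hb (by simp)
    refine h2 i ⟨?_, ?_⟩
    · rw [tb_shift htn, if_neg (by omega : i ≠ n)]; exact ha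
    · rw [tb_shift htn, if_neg (by omega : i + 1 ≠ n)]; exact hb
  · rintro ⟨h1, h2⟩
    refine ⟨hodd.mpr h1, fun i ⟨ha, hb⟩ => ?_⟩
    rw [tb_shift htn] at ha hb
    rcases eq_or_ne i n with h | h
    · rw [if_neg (by omega : i + 1 ≠ n)] at hb
      have : t.testBit (i + 1) = false :=
        Nat.testBit_lt_two_pow (ht.trans_le (Nat.pow_le_pow_right (by norm_num) (by omega)))
      rw [this] at hb; exact absurd hb (by simp)
    rcases eq_or_ne (i + 1) n with h' | h'
    · rw [if_neg h] at ha
      have : t.testBit i = false :=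
        Nat.testBit_lt_two_pow (by rw [show i = n - 1 by omega]; exact ht)
      rw [this] at ha; exact absurd ha (by simp)
    · rw [if_neg h] at ha; rw [if_neg h'] at hb
      exact h2 i ⟨ha, hb⟩

open Classical in
lemma count_shift {n : ℕ} (hn : 2 ≤ n) {m : ℕ} (hm : m ≤ 2 ^ (n - 1)) :
    Nat.count P (2 ^ n + m) = Nat.count P (2 ^ n) + Nat.count P m := by
  induction m with
  | zero => simp
  | succ m ih =>
    rw [← Nat.add_assoc, Nat.count_succ, Nat.count_succ, ih (by omega)]
    have := shift hn (show m < 2 ^ (n - 1) by omega)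
    by_cases h : P m
    · rw [if_pos ((shift hn (by omega)).mpr h), if_pos h]; ring
    · rw [if_neg (fun hc => h ((shift hn (by omega)).mp hc)), if_neg h]; ring

lemma fib1 : IsFibbinary 1 := by
  intro i ⟨_, hb⟩
  rw [Nat.testBit_lt_two_pow (show 1 < 2 ^ (i + 1) from Nat.one_lt_two_pow (by omega))] at hb
  exact absurd hb (by simp)

lemma P1 : P 1 := ⟨odd_one, fib1⟩

lemma hinf : (setOf P).Infinite := by
  apply Set.infinite_of_injective_forall_mem (f := fun j : ℕ => 2 ^ (2 * j + 2) + 1)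
  case hi =>
    intro a b hab
    simp only at hab
    have := Nat.pow_right_injective (le_refl 2) (by omega : 2 ^ (2 * a + 2) = 2 ^ (2 * b + 2))
    omega
  · intro j
    have h1 : (1 : ℕ) < 2 ^ (2 * j + 2) := Nat.one_lt_two_pow (by omega)
    refine ⟨⟨2 ^ (2 * j + 1), by rw [pow_succ]; ring⟩, fun i ⟨ha, hb⟩ => ?_⟩
    rw [tb_shift h1] at ha hb
    rcases eq_or_ne i (2 * j + 2) with h | h
    · rw [if_neg (by omega)] at hb
      rw [Nat.testBit_lt_two_pow (show 1 < 2 ^ (i + 1) from Nat.one_lt_two_pow (by omega))] at hb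
      exact absurd hb (by simp)
    rcases eq_or_ne (i + 1) (2 * j + 2) with h' | h'
    · rw [if_neg h] at ha
      rw [Nat.testBit_lt_two_pow (show 1 < 2 ^ i from Nat.one_lt_two_pow (by omega))] at ha
      exact absurd ha (by simp)
    · rw [if_neg h] at ha; rw [if_neg h'] at hb
      exact fib1 i ⟨ha, hb⟩

open Classical in
lemma count_zero_of {q : ℕ → Prop} {m : ℕ} (h : ∀ k < m, ¬ q k) : Nat.count q m = 0 := by
  induction m with
  | zero => simp
  | succ m ih =>
    rw [Nat.count_succ, if_neg (h m (by omega)), ih (fun k hk => h k (by omega))]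

open Classical in
lemma count_step {n : ℕ} (hn2 : 2 ≤ n)
    (h1 : Nat.count P (2 ^ (n - 1)) = Nat.fib (n - 1))
    (h2 : Nat.count P (2 ^ n) = Nat.fib n) :
    Nat.count P (2 ^ (n + 1)) = Nat.fib (n + 1) := by
  have hp : (2 : ℕ) ^ n = 2 * 2 ^ (n - 1) := by
    rw [← pow_succ']; congr 1; omega
  have hsplit : (2 : ℕ) ^ (n + 1) = (2 ^ n + 2 ^ (n - 1)) + 2 ^ (n - 1) := by
    rw [pow_succ]; omega
  have hzero : Nat.count (fun k => P (2 ^ n + 2 ^ (n - 1) + k)) (2 ^ (n - 1)) = 0 := by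
    apply count_zero_of
    rintro k hk ⟨_, hf⟩
    have ht : 2 ^ (n - 1) + k < 2 ^ n := by omega
    refine hf (n - 1) ?_
    rw [show n - 1 + 1 = n by omega, Nat.add_assoc]
    constructor
    · rw [tb_shift ht, if_neg (by omega : n - 1 ≠ n), tb_shift hk, if_pos rfl]
    · rw [tb_shift ht, if_pos rfl]
  rw [hsplit, Nat.count_add, hzero, Nat.add_zero,
    count_shift hn2 (le_refl _), h1, h2,
    show n + 1 = (n - 1) + 2 by omega, Nat.fib_add_two, show n - 1 + 1 = n by omega, Nat.add_comm]

open Classical in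
lemma count_pow_aux : ∀ m : ℕ,
    Nat.count P (2 ^ (m + 1)) = Nat.fib (m + 1) ∧
    Nat.count P (2 ^ (m + 2)) = Nat.fib (m + 2) := by
  have c2 : Nat.count P 2 = 1 := by
    rw [show (2 : ℕ) = 0 + 1 + 1 by rfl, Nat.count_succ, Nat.count_succ, Nat.count_zero,
      if_pos P1, if_neg (by simp [P, Nat.odd_iff])]
  have c4 : Nat.count P 4 = 1 := by
    have h3 : ¬ P 3 := fun h => h.2 0 ⟨by decide, by decide⟩
    rw [show (4 : ℕ) = 2 + 1 + 1 by rfl, Nat.count_succ, Nat.count_succ, c2,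
      if_neg h3, if_neg (by simp [P, Nat.odd_iff])]
  intro m
  induction m with
  | zero => exact ⟨by simpa using c2, by simpa using c4⟩
  | succ m ih =>
    refine ⟨ih.2, ?_⟩
    have := count_step (n := m + 2) (by omega) (by simpa using ih.1) ih.2
    simpa using this

open Classical in
lemma count_pow {n : ℕ} (hn : 1 ≤ n) : Nat.count P (2 ^ n) = Nat.fib n := by
  obtain ⟨m, rfl⟩ : ∃ m, n = m + 1 := ⟨n - 1, by omega⟩
  exact (count_pow_aux m).1

end OdfibAux

open OdfibAux

/-- For `n ≥ 2` and `1 ≤ k ≤ F_{n−1}`, `odfib (F_n + k) = 2^n + odfib k`. -/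
theorem odfib_fib_add (n k : ℕ) (hn : 2 ≤ n) (hk1 : 1 ≤ k)
    (hk2 : k ≤ Nat.fib (n - 1)) :
    odfib (Nat.fib n + k) = 2 ^ n + odfib k := by
  classical
  set m := Nat.nth P (k - 1) with hm
  have pm : P m := Nat.nth_mem_of_infinite hinf _
  have hcm : Nat.count P m = k - 1 := Nat.count_nth_of_infinite hinf _
  have hmlt : m < 2 ^ (n - 1) := by
    by_contra h
    have h1 : Nat.count P (2 ^ (n - 1)) ≤ Nat.count P m := Nat.count_monotone P (by omega)
    rw [count_pow (by omega), hcm] at h1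
    omega
  have px : P (2 ^ n + m) := (shift hn hmlt).mpr pm
  have hcount : Nat.count P (2 ^ n + m) = Nat.fib n + k - 1 := by
    rw [count_shift hn hmlt.le, count_pow (by omega), hcm]; omega
  have h := Nat.nth_count px
  rw [hcount] at h
  show Nat.nth P (Nat.fib n + k - 1) = 2 ^ n + m
  exact h
end

section
/- For every integer n ≥ 2 and every integer k with 1 ≤ k ≤ F_{n−1}, one has Z(F_n + k) = F_{n+2} + Z(k), where F_m denotes the m-th Fibonacci number. -/
namespace ZAux

/-- positive fibbinary -/
def Pp (m : ℕ) : Prop := 0 < m ∧ IsFibbinary m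
/-- odd fibbinary -/
def Qp (m : ℕ) : Prop := Odd m ∧ IsFibbinary m

noncomputable instance : DecidablePred IsFibbinary := fun _ => Classical.propDecidable _
noncomputable instance : DecidablePred Pp := fun _ => Classical.propDecidable _
noncomputable instance : DecidablePred Qp := fun _ => Classical.propDecidable _

lemma testBit_pow_add {m y : ℕ} (hy : y < 2 ^ m) (j : ℕ) :
    (2 ^ m + y).testBit j = if j < m then y.testBit j else decide (j = m) := by
  have h := Nat.testBit_two_pow_mul_add 1 hy j
  rw [mul_one] at h
  rw [h]
  by_cases hj : j < m
  · simp [hj]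
  · simp only [if_neg hj]
    rw [show (1 : ℕ) = 2 ^ 0 by norm_num, Nat.testBit_two_pow]
    simp only [decide_eq_decide]
    omega

lemma fb_zero : IsFibbinary 0 := by
  intro i h
  simp at h

lemma fb_one : IsFibbinary 1 := by
  intro i h
  have : (1 : ℕ).testBit (i + 1) = false :=
    Nat.testBit_lt_two_pow (Nat.one_lt_two_pow (by omega))
  rw [this] at h
  exact absurd h.2 (by simp)

lemma isFibbinary_shift {m y : ℕ} (hy : y < 2 ^ m) :
    IsFibbinary (2 ^ (m + 1) + y) ↔ IsFibbinary y := by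
  have hy' : y < 2 ^ (m + 1) :=
    lt_of_lt_of_le hy (Nat.pow_le_pow_right (by norm_num) (by omega))
  have hb : ∀ j, (2 ^ (m + 1) + y).testBit j
      = if j < m + 1 then y.testBit j else decide (j = m + 1) :=
    testBit_pow_add hy'
  have hyhigh : ∀ j, m ≤ j → y.testBit j = false := fun j hj =>
    Nat.testBit_lt_two_pow (lt_of_lt_of_le hy (Nat.pow_le_pow_right (by norm_num) hj))
  constructor
  · intro h i hcon
    obtain ⟨h1, h2⟩ := hcon
    have hi1 : i + 1 < m := by
      by_contra hc
      rw [hyhigh (i + 1) (by omega)] at h2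
      exact absurd h2 (by simp)
    refine h i ⟨?_, ?_⟩
    · rw [hb, if_pos (by omega)]; exact h1
    · rw [hb, if_pos (by omega)]; exact h2
  · intro h i hcon
    obtain ⟨h1, h2⟩ := hcon
    rw [hb] at h1 h2
    by_cases c2 : i + 1 < m + 1
    · rw [if_pos (show i < m + 1 by omega)] at h1
      rw [if_pos c2] at h2
      exact h i ⟨h1, h2⟩
    · rw [if_neg c2] at h2
      have him : i = m := by
        have := of_decide_eq_true h2
        omega
      rw [him, if_pos (by omega), hyhigh m le_rfl] at h1
      exact absurd h1 (by simp)

lemma odd_shift (m y : ℕ) : Odd (2 ^ (m + 1) + y) ↔ Odd y := by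
  rw [add_comm, Nat.odd_add]
  simp [Nat.even_pow]

lemma qp_shift {m y : ℕ} (hy : y < 2 ^ m) : Qp (2 ^ (m + 1) + y) ↔ Qp y :=
  and_congr (odd_shift m y) (isFibbinary_shift hy)

lemma not_fib_band {m w : ℕ} (hw1 : 2 ^ m ≤ w) (hw2 : w < 2 ^ (m + 1)) :
    ¬ IsFibbinary (2 ^ (m + 1) + w) := by
  intro h
  refine h m ⟨?_, ?_⟩
  · rw [testBit_pow_add hw2, if_pos (by omega)]
    rw [Nat.testBit_eq_decide_div_mod_eq]
    have hdiv : w / 2 ^ m = 1 := by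
      have h2 : 2 ^ (m + 1) = 2 ^ m + 2 ^ m := by ring
      apply Nat.div_eq_of_lt_le <;> omega
    simp [hdiv]
  · rw [testBit_pow_add hw2, if_neg (by omega)]
    simp

lemma count_shift (R : ℕ → Prop) [DecidablePred R] (m x : ℕ)
    (hR : ∀ y, y < x → (R (2 ^ m + y) ↔ R y)) :
    Nat.count R (2 ^ m + x) = Nat.count R (2 ^ m) + Nat.count R x := by
  induction x with
  | zero => simp
  | succ x ih =>
    rw [show 2 ^ m + (x + 1) = (2 ^ m + x) + 1 from rfl, Nat.count_succ, Nat.count_succ,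
      ih (fun y hy => hR y (by omega))]
    have h := hR x (by omega)
    by_cases hx : R x
    · rw [if_pos hx, if_pos (h.mpr hx)]; omega
    · rw [if_neg hx, if_neg (fun c => hx (h.mp c))]
      omega

lemma count_const (R : ℕ → Prop) [DecidablePred R] (a d : ℕ)
    (h : ∀ j, a ≤ j → j < a + d → ¬ R j) :
    Nat.count R (a + d) = Nat.count R a := by
  induction d with
  | zero => rfl
  | succ d ih =>
    rw [show a + (d + 1) = (a + d) + 1 from rfl, Nat.count_succ,
      if_neg (h (a + d) (by omega) (by omega)),
      ih (fun j h1 h2 => h j h1 (by omega)), add_zero]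

lemma count_fb_pow (m : ℕ) :
    Nat.count IsFibbinary (2 ^ m) = Nat.fib (m + 2) := by
  induction m using Nat.strong_induction_on with
  | _ m ih =>
    match m with
    | 0 =>
      show Nat.count IsFibbinary 1 = 1
      rw [Nat.count_one, if_pos fb_zero]
    | 1 =>
      show Nat.count IsFibbinary 2 = 2
      rw [show (2 : ℕ) = 1 + 1 from rfl, Nat.count_succ, Nat.count_one,
        if_pos fb_zero, if_pos fb_one]
    | (m + 2) =>
      have h2 : 2 ^ (m + 1) = 2 ^ m + 2 ^ m := by ring
      have e : 2 ^ (m + 2) = (2 ^ (m + 1) + 2 ^ m) + 2 ^ m := by ring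
      rw [e, count_const IsFibbinary (2 ^ (m + 1) + 2 ^ m) (2 ^ m) (by
          intro j hj1 hj2
          obtain ⟨w, rfl⟩ : ∃ w, j = 2 ^ (m + 1) + w := ⟨j - 2 ^ (m + 1), by omega⟩
          exact not_fib_band (by omega) (by omega)),
        count_shift IsFibbinary (m + 1) (2 ^ m) (fun y hy => isFibbinary_shift (by omega)),
        ih (m + 1) (by omega), ih m (by omega)]
      have hf := Nat.fib_add_two (n := m + 2)
      have e1 : m + 1 + 2 = m + 2 + 1 := by omega
      rw [e1]
      omega

lemma count_q_pow (m : ℕ) :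
    Nat.count Qp (2 ^ m) = Nat.fib m := by
  induction m using Nat.strong_induction_on with
  | _ m ih =>
    match m with
    | 0 =>
      show Nat.count Qp 1 = 0
      rw [Nat.count_one, if_neg (by simp [Qp])]
    | 1 =>
      show Nat.count Qp 2 = 1
      rw [show (2 : ℕ) = 1 + 1 from rfl, Nat.count_succ, Nat.count_one,
        if_neg (by simp [Qp]), if_pos (show Qp 1 from ⟨odd_one, fb_one⟩)]
    | (m + 2) =>
      have h2 : 2 ^ (m + 1) = 2 ^ m + 2 ^ m := by ring
      have e : 2 ^ (m + 2) = (2 ^ (m + 1) + 2 ^ m) + 2 ^ m := by ring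
      rw [e, count_const Qp (2 ^ (m + 1) + 2 ^ m) (2 ^ m) (by
          intro j hj1 hj2
          obtain ⟨w, rfl⟩ : ∃ w, j = 2 ^ (m + 1) + w := ⟨j - 2 ^ (m + 1), by omega⟩
          exact fun c => not_fib_band (m := m) (by omega) (by omega) c.2),
        count_shift Qp (m + 1) (2 ^ m) (fun y hy => qp_shift (by omega)),
        ih (m + 1) (by omega), ih m (by omega)]
      have hf := Nat.fib_add_two (n := m)
      omega

lemma count_pos_eq (x : ℕ) (hx : 1 ≤ x) :
    Nat.count IsFibbinary x = Nat.count Pp x + 1 := by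
  induction x with
  | zero => omega
  | succ x ih =>
    rcases Nat.lt_or_ge 0 x with h | h
    · rw [Nat.count_succ, Nat.count_succ, ih h]
      by_cases hfb : IsFibbinary x
      · rw [if_pos hfb, if_pos (show Pp x from ⟨h, hfb⟩)]
      · rw [if_neg hfb, if_neg (fun c => hfb c.2)]
    · have hx0 : x = 0 := by omega
      subst hx0
      rw [Nat.count_one, Nat.count_one, if_pos fb_zero, if_neg (by simp [Pp])]

lemma fb_pow_add_one {a : ℕ} (ha : 2 ≤ a) : IsFibbinary (2 ^ a + 1) := by
  have hb : ∀ j, (2 ^ a + 1).testBit j = (decide (j = 0) || decide (j = a)) := by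
    intro j
    rw [testBit_pow_add (Nat.one_lt_two_pow (by omega)),
      show (1 : ℕ) = 2 ^ 0 by norm_num, Nat.testBit_two_pow]
    by_cases c : j < a
    · rw [if_pos c]
      have hja : j ≠ a := by omega
      by_cases j0 : j = 0
      · subst j0; simp
      · have h0j : ¬ (0 = j) := fun h => j0 h.symm
        simp [j0, hja, h0j]
    · rw [if_neg c]
      have hj0 : ¬ (j = 0) := by omega
      simp [hj0]
  intro i hcon
  obtain ⟨h1, h2⟩ := hcon
  rw [hb] at h1 h2
  simp only [Bool.or_eq_true, decide_eq_true_eq] at h1 h2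
  omega

lemma q_infinite : (setOf Qp).Infinite := by
  refine Set.infinite_of_injective_forall_mem
    (f := fun i : ℕ => 2 ^ (2 * i + 2) + 1) (fun i j h => ?_) (fun i => ?_)
  · simp only [add_left_inj] at h
    have := Nat.pow_right_injective le_rfl h
    omega
  · refine ⟨?_, fb_pow_add_one (by omega)⟩
    exact (Nat.even_pow.mpr ⟨even_two, by omega⟩).add_one

lemma p_infinite : (setOf Pp).Infinite := by
  refine Set.infinite_of_injective_forall_mem
    (f := fun i : ℕ => 2 ^ (2 * i + 2) + 1) (fun i j h => ?_) (fun i => ?_)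
  · simp only [add_left_inj] at h
    have := Nat.pow_right_injective le_rfl h
    omega
  · exact ⟨by positivity, fb_pow_add_one (by omega)⟩

lemma odfib_eq_nth (n : ℕ) : odfib n = Nat.nth Qp (n - 1) := rfl

lemma fibbin_eq_nth (n : ℕ) : fibbin n = Nat.nth Pp (n - 1) := rfl

lemma Z_eq (n : ℕ) : Z n = Nat.count Pp (odfib n) + 1 := by
  set c := Nat.count Pp (odfib n) with hc
  have hq : Qp (odfib n) := by
    rw [odfib_eq_nth]
    exact Nat.nth_mem_of_infinite q_infinite (n - 1)
  have hp : Pp (odfib n) := ⟨hq.1.pos, hq.2⟩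
  have key : Nat.nth Pp c = odfib n := Nat.nth_count hp
  have hset : {j : ℕ | 1 ≤ j ∧ fibbin j = odfib n} = {c + 1} := by
    ext j
    simp only [Set.mem_setOf_eq, Set.mem_singleton_iff]
    constructor
    · rintro ⟨h1, h2⟩
      rw [fibbin_eq_nth, ← key] at h2
      have := Nat.nth_injective p_infinite h2
      omega
    · rintro rfl
      refine ⟨by omega, ?_⟩
      rw [fibbin_eq_nth]
      simpa using key
  rw [Z, hset, csInf_singleton]

end ZAux

open ZAux in
/-- For `n ≥ 2` and `1 ≤ k ≤ F_{n−1}`, `Z (F_n + k) = F_{n+2} + Z k`. -/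
theorem Z_fib_add (n k : ℕ) (hn : 2 ≤ n) (hk1 : 1 ≤ k)
    (hk2 : k ≤ Nat.fib (n - 1)) :
    Z (Nat.fib n + k) = Nat.fib (n + 2) + Z k := by
  obtain ⟨m, rfl⟩ : ∃ m, n = m + 2 := ⟨n - 2, by omega⟩
  rw [show m + 2 - 1 = m + 1 from rfl] at hk2
  have hqy : Qp (odfib k) := by
    rw [odfib_eq_nth]
    exact Nat.nth_mem_of_infinite q_infinite (k - 1)
  have h0y : 0 < odfib k := hqy.1.pos
  have hylt : odfib k < 2 ^ (m + 1) := by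
    rw [odfib_eq_nth]
    apply Nat.nth_lt_of_lt_count
    rw [count_q_pow (m + 1)]
    omega
  have hq2 : Qp (2 ^ (m + 2) + odfib k) := qp_shift hylt |>.mpr hqy
  have hcq : Nat.count Qp (2 ^ (m + 2) + odfib k) = Nat.fib (m + 2) + (k - 1) := by
    rw [count_shift Qp (m + 2) (odfib k) (fun y' hy' => qp_shift (by omega)),
      count_q_pow (m + 2), odfib_eq_nth, Nat.count_nth_of_infinite q_infinite]
  have hodfib : odfib (Nat.fib (m + 2) + k) = 2 ^ (m + 2) + odfib k := by
    rw [odfib_eq_nth (Nat.fib (m + 2) + k),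
      show Nat.fib (m + 2) + k - 1 = Nat.fib (m + 2) + (k - 1) by omega, ← hcq]
    exact Nat.nth_count hq2
  have hcfb : Nat.count IsFibbinary (2 ^ (m + 2) + odfib k)
      = Nat.fib (m + 4) + Nat.count IsFibbinary (odfib k) := by
    rw [count_shift IsFibbinary (m + 2) (odfib k)
        (fun y' hy' => isFibbinary_shift (by omega)),
      count_fb_pow (m + 2)]
  have hcp : Nat.count Pp (2 ^ (m + 2) + odfib k)
      = Nat.fib (m + 4) + Nat.count Pp (odfib k) := by
    have e1 := count_pos_eq (2 ^ (m + 2) + odfib k)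
      (le_trans Nat.one_le_two_pow (Nat.le_add_right _ _))
    have e2 := count_pos_eq (odfib k) h0y
    omega
  rw [Z_eq, Z_eq, hodfib, hcp, show m + 2 + 2 = m + 4 from rfl]
  omega
end

section
/- For every integer n ≥ 3 and every integer k with 2 ≤ k ≤ F_{n−1}, one has ⌊(F_n + k)·τ⌋ − ⌊(F_n + k − 1)·τ⌋ = ⌊k·τ⌋ − ⌊(k − 1)·τ⌋, where τ = (√5−1)/2 and F_m denotes the m-th Fibonacci number. -/
noncomputable def tauR : ℝ := (Real.sqrt 5 - 1) / 2

lemma sqrt5_sq : Real.sqrt 5 ^ 2 = 5 := Real.sq_sqrt (by norm_num)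

lemma tau_gt : (1:ℝ)/2 < tauR := by
  have h := sqrt5_sq
  have h0 : (0:ℝ) ≤ Real.sqrt 5 := Real.sqrt_nonneg 5
  unfold tauR; nlinarith

lemma tau_lt : tauR < 1 := by
  have h := sqrt5_sq
  have h0 : (0:ℝ) ≤ Real.sqrt 5 := Real.sqrt_nonneg 5
  unfold tauR; nlinarith

lemma tau_pos : 0 < tauR := lt_trans (by norm_num) tau_gt

lemma tau_sq : tauR ^ 2 = 1 - tauR := by
  have h := sqrt5_sq
  unfold tauR; nlinarith

/-- `F_{n+1} τ = F_n − (−τ)^{n+1}`. -/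
lemma fib_mul_tau : ∀ n : ℕ, (Nat.fib (n+1) : ℝ) * tauR = (Nat.fib n : ℝ) - (-tauR) ^ (n+1) := by
  intro n
  induction n using Nat.twoStepInduction with
  | zero => simp
  | one =>
      have h := tau_sq
      simp [Nat.fib]; ring_nf; nlinarith
  | more n ih1 ih2 =>
      have hfib : (Nat.fib (n+3) : ℝ) = Nat.fib (n+2) + Nat.fib (n+1) := by
        rw [Nat.fib_add_two]; push_cast; ring
      have hfib2 : (Nat.fib (n+2) : ℝ) = Nat.fib (n+1) + Nat.fib n := by
        rw [Nat.fib_add_two]; push_cast; ring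
      have hts : (-tauR) ^ (n+3) = (-tauR) ^ (n+1) * (1 - tauR) := by
        have : (-tauR) ^ (n+3) = (-tauR) ^ (n+1) * tauR ^ 2 := by ring
        rw [this, tau_sq]
      have ih2' : (Nat.fib (n+2) : ℝ) * tauR = (Nat.fib (n+1) : ℝ) - (-tauR) ^ (n+2) := ih2
      have goal' : (Nat.fib (n+3) : ℝ) * tauR = (Nat.fib (n+2) : ℝ) - (-tauR) ^ (n+3) := by
        rw [hfib, add_mul, ih1, ih2', hfib2, hts]
        have h2' : (-tauR) ^ (n+2) = -((-tauR) ^ (n+1) * tauR) := by ring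
        rw [h2']
        ring
      exact goal'

/-- Best approximation bound: for `1 ≤ m < F_{n+1}`, `|mτ − p| ≥ τ^n`. -/
lemma key : ∀ (n m : ℕ), 1 ≤ m → m < Nat.fib (n+1) → ∀ p : ℤ, tauR ^ n ≤ |(m:ℝ) * tauR - p| := by
  intro n
  induction n using Nat.twoStepInduction with
  | zero => intro m h1 h2; simp [Nat.fib] at h2; omega
  | one => intro m h1 h2; simp [Nat.fib] at h2; omega
  | more n ih ih1 =>
      intro m h1 h2 p
      have htp := tau_pos
      have htl := tau_lt
      have htg := tau_gt
      have hts := tau_sq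
      have hpowle : tauR ^ (n+2) ≤ tauR ^ 2 :=
        pow_le_pow_of_le_one (le_of_lt htp) (le_of_lt htl) (by omega)
      have hpow2pos : (0:ℝ) < tauR ^ (n+2) := pow_pos htp _
      rcases lt_or_ge m (Nat.fib (n+2)) with hm | hm
      · have := ih1 m h1 hm p
        have hmono : tauR ^ (n+2) ≤ tauR ^ (n+1) :=
          pow_le_pow_of_le_one (le_of_lt htp) (le_of_lt htl) (by omega)
        linarith
      · -- m = fib (n+2) + r
        set r := m - Nat.fib (n+2) with hr
        have hmr : (m:ℝ) = (Nat.fib (n+2) : ℝ) + r := by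
          have : m = Nat.fib (n+2) + r := by omega
          rw [this]; push_cast; ring
        have h2' : m < Nat.fib (n+3) := h2
        have hft : Nat.fib (n+3) = Nat.fib (n+1) + Nat.fib (n+2) := Nat.fib_add_two
        have hrlt : r < Nat.fib (n+1) := by omega
        have hsplit : (m:ℝ) * tauR - p
            = ((r:ℝ) * tauR - ((p:ℝ) - (Nat.fib (n+1) : ℝ))) - (-tauR) ^ (n+2) := by
          rw [hmr, add_mul, fib_mul_tau (n+1)]; ring
        have habs : |(-tauR) ^ (n+2)| = tauR ^ (n+2) := by
          rw [abs_pow, abs_neg, abs_of_pos htp]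
        rcases Nat.eq_zero_or_pos r with hr0 | hr1
        · -- r = 0
          rw [hsplit, hr0]
          set q : ℤ := (Nat.fib (n+1) : ℤ) - p with hq
          have hqc : ((0:ℕ):ℝ) * tauR - ((p:ℝ) - (Nat.fib (n+1) : ℝ)) = (q:ℝ) := by
            push_cast [hq]; ring
          rw [hqc]
          rcases eq_or_ne q 0 with h0 | h0
          · rw [h0]; simp [habs]
          · have hq1 : (1:ℝ) ≤ |(q:ℝ)| := by
              have : (1:ℤ) ≤ |q| := Int.one_le_abs h0
              calc (1:ℝ) = ((1:ℤ):ℝ) := by norm_num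
                _ ≤ ((|q|:ℤ):ℝ) := by exact_mod_cast this
                _ = |(q:ℝ)| := by push_cast; rfl
            have h1 := abs_sub_abs_le_abs_sub (q:ℝ) ((-tauR) ^ (n+2))
            rw [habs] at h1
            nlinarith
        · -- r ≥ 1
          have hkey := ih r hr1 hrlt (p - (Nat.fib (n+1) : ℤ))
          have hcast : ((p - (Nat.fib (n+1) : ℤ) : ℤ) : ℝ) = (p:ℝ) - (Nat.fib (n+1) : ℝ) := by
            push_cast; ring
          rw [hcast] at hkey
          rw [hsplit]
          have h1 := abs_sub_abs_le_abs_sub ((r:ℝ) * tauR - ((p:ℝ) - (Nat.fib (n+1) : ℝ)))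
            ((-tauR) ^ (n+2))
          rw [habs] at h1
          have hpown : tauR ^ (n+2) = tauR ^ n * (1 - tauR) := by
            rw [← tau_sq]; ring
          have hpow1 : tauR ^ (n+1) = tauR ^ n * tauR := by ring
          have hmono : tauR ^ (n+2) ≤ tauR ^ (n+1) :=
            pow_le_pow_of_le_one (le_of_lt htp) (le_of_lt htl) (by omega)
          have hpn : (0:ℝ) < tauR ^ n := pow_pos htp _
          nlinarith

/-- For `1 ≤ m < F_n` (with `n ≥ 1`), `⌊mτ − (−τ)^n⌋ = ⌊mτ⌋`. -/
lemma floor_shift (n m : ℕ) (hn : 1 ≤ n) (h1 : 1 ≤ m) (h2 : m < Nat.fib n) :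
    ⌊(m:ℝ) * tauR - (-tauR) ^ n⌋ = ⌊(m:ℝ) * tauR⌋ := by
  obtain ⟨n', rfl⟩ : ∃ n', n = n' + 1 := ⟨n - 1, by omega⟩
  have htp := tau_pos
  have htl := tau_lt
  have hpowpos : (0:ℝ) < tauR ^ (n'+1) := pow_pos htp _
  have habs : |(-tauR) ^ (n'+1)| ≤ tauR ^ (n'+1) := by
    rw [abs_pow, abs_neg, abs_of_pos htp]
  have hlt : tauR ^ (n'+1) < tauR ^ n' := by
    have := pow_lt_pow_right_of_lt_one₀ htp htl (Nat.lt_succ_self n')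
    exact this
  set x := (m:ℝ) * tauR with hx
  have hlow := key n' m h1 h2 ⌊x⌋
  have hhigh := key n' m h1 h2 (⌊x⌋ + 1)
  have hfl : (⌊x⌋ : ℝ) ≤ x := Int.floor_le x
  have hfl2 : x < ⌊x⌋ + 1 := Int.lt_floor_add_one x
  have hlow' : (⌊x⌋:ℝ) + tauR ^ n' ≤ x := by
    have : |x - ⌊x⌋| = x - ⌊x⌋ := abs_of_nonneg (by linarith)
    rw [this] at hlow; linarith
  have hhigh' : x + tauR ^ n' ≤ (⌊x⌋:ℝ) + 1 := by
    have hc : ((⌊x⌋ + 1 : ℤ):ℝ) = (⌊x⌋:ℝ) + 1 := by push_cast; ring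
    rw [hc] at hhigh
    have : |x - ((⌊x⌋:ℝ) + 1)| = (⌊x⌋:ℝ) + 1 - x := by
      rw [abs_of_nonpos (by linarith)]; ring
    rw [this] at hhigh; linarith
  have hb := abs_le.mp habs
  apply Int.floor_eq_iff.mpr
  constructor
  · linarith
  · linarith

/-- For every `n ≥ 3` and `2 ≤ k ≤ F_{n−1}`,
`⌊(F_n + k)·τ⌋ − ⌊(F_n + k − 1)·τ⌋ = ⌊k·τ⌋ − ⌊(k − 1)·τ⌋`,
where `τ = (√5−1)/2`. -/
theorem floor_diff_tau (n k : ℕ) (hn : 3 ≤ n) (hk1 : 2 ≤ k)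
    (hk2 : k ≤ Nat.fib (n - 1)) :
    ⌊((Nat.fib n : ℝ) + (k : ℝ)) * ((Real.sqrt 5 - 1) / 2)⌋
      - ⌊((Nat.fib n : ℝ) + (k : ℝ) - 1) * ((Real.sqrt 5 - 1) / 2)⌋
    = ⌊(k : ℝ) * ((Real.sqrt 5 - 1) / 2)⌋
      - ⌊((k : ℝ) - 1) * ((Real.sqrt 5 - 1) / 2)⌋ := by
  have htau : (Real.sqrt 5 - 1) / 2 = tauR := rfl
  rw [htau]
  obtain ⟨n', rfl⟩ : ∃ n', n = n' + 1 := ⟨n - 1, by omega⟩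
  have hn' : 2 ≤ n' := by omega
  simp only [Nat.add_sub_cancel] at hk2
  have hfibn : (Nat.fib (n'+1) : ℝ) * tauR = (Nat.fib n' : ℝ) - (-tauR) ^ (n'+1) :=
    fib_mul_tau n'
  have hfiblt : Nat.fib n' < Nat.fib (n'+1) := by
    have h2 : 2 ≤ Nat.fib n' := le_trans hk1 hk2
    exact Nat.fib_lt_fib_succ (by omega)
  -- helper: for 1 ≤ m < fib (n'+1), ⌊(fib(n'+1)+m)τ⌋ = fib n' + ⌊mτ⌋
  have main : ∀ m : ℕ, 1 ≤ m → m < Nat.fib (n'+1) →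
      ⌊((Nat.fib (n'+1) : ℝ) + (m:ℝ)) * tauR⌋ = (Nat.fib n' : ℤ) + ⌊(m:ℝ) * tauR⌋ := by
    intro m h1 h2
    have he : ((Nat.fib (n'+1) : ℝ) + (m:ℝ)) * tauR
        = ((m:ℝ) * tauR - (-tauR) ^ (n'+1)) + ((Nat.fib n' : ℤ) : ℝ) := by
      rw [add_mul, hfibn]; push_cast; ring
    rw [he, Int.floor_add_intCast, floor_shift (n'+1) m (by omega) h1 h2]
    ring
  have hk1' : (1:ℕ) ≤ k - 1 := by omega
  have hkm1 : ((k:ℝ) - 1) = ((k - 1 : ℕ) : ℝ) := by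
    have : (k:ℕ) = (k-1) + 1 := by omega
    rw [this]; push_cast; ring
  have e1 : ⌊((Nat.fib (n'+1) : ℝ) + (k : ℝ)) * tauR⌋ = (Nat.fib n' : ℤ) + ⌊(k:ℝ) * tauR⌋ :=
    main k (by omega) (lt_of_le_of_lt hk2 hfiblt)
  have e2 : ⌊((Nat.fib (n'+1) : ℝ) + (k : ℝ) - 1) * tauR⌋
      = (Nat.fib n' : ℤ) + ⌊((k:ℝ) - 1) * tauR⌋ := by
    have harg : (Nat.fib (n'+1) : ℝ) + (k : ℝ) - 1 = (Nat.fib (n'+1) : ℝ) + ((k-1:ℕ) : ℝ) := by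
      rw [← hkm1]; ring
    rw [harg, main (k-1) hk1' (by omega), hkm1]
  rw [e1, e2]; ring
end

section
/- For every integer n ≥ 3 and every integer k with 2 ≤ k ≤ F_{n−1}, one has ⌊(F_n + k)·φ⌋ − ⌊(F_n + k − 1)·φ⌋ = ⌊k·φ⌋ − ⌊(k − 1)·φ⌋, where φ = (1+√5)/2 and F_m denotes the m-th Fibonacci number. -/
open Real goldenRatio

/-- Diophantine estimate: for `k ≥ 1` and any integer `m` within distance 1
of `k·φ`, the distance is at least `1/(k√5 + 1)`. -/
lemma aux_dist (k : ℕ) (m : ℤ) (hk : 1 ≤ k) (hm : |(k : ℝ) * φ - m| ≤ 1) :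
    1 / ((k : ℝ) * Real.sqrt 5 + 1) ≤ |(k : ℝ) * φ - m| := by
  have hk0 : (k : ℝ) ≠ 0 := by positivity
  have hkpos : (0:ℝ) < k := by positivity
  have hirr1 : Irrational ((k : ℝ) * φ) := by
    simpa using goldenRatio_irrational.natCast_mul (by omega : k ≠ 0)
  have hirr2 : Irrational ((k : ℝ) * ψ) := by
    simpa using goldenConj_irrational.natCast_mul (by omega : k ≠ 0)
  have h1 : (k : ℝ) * φ - m ≠ 0 := sub_ne_zero.mpr (hirr1.ne_int m)
  have h2 : (k : ℝ) * ψ - m ≠ 0 := sub_ne_zero.mpr (hirr2.ne_int m)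
  have hP : ((k : ℝ) * φ - m) * ((k : ℝ) * ψ - m)
      = ((m ^ 2 - k * m - k ^ 2 : ℤ) : ℝ) := by
    push_cast
    linear_combination (k:ℝ)^2 * goldenRatio_mul_goldenConj - (k:ℝ)*(m:ℝ) * goldenRatio_add_goldenConj
  have hPne : (m ^ 2 - k * m - k ^ 2 : ℤ) ≠ 0 := by
    intro h
    apply mul_ne_zero h1 h2
    rw [hP, h]; norm_num
  have hP1 : (1 : ℝ) ≤ |((k : ℝ) * φ - m) * ((k : ℝ) * ψ - m)| := by
    rw [hP, ← Int.cast_abs]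
    exact_mod_cast Int.one_le_abs hPne
  have hdiff : (k : ℝ) * φ - (k : ℝ) * ψ = (k : ℝ) * Real.sqrt 5 := by
    rw [← mul_sub, goldenRatio_sub_goldenConj]
  have hb : |(k : ℝ) * ψ - m| ≤ (k : ℝ) * Real.sqrt 5 + 1 := by
    have : (k : ℝ) * ψ - m = -((k : ℝ) * Real.sqrt 5) + ((k : ℝ) * φ - m) := by
      linarith [hdiff]
    rw [this]
    calc |(-((k : ℝ) * Real.sqrt 5)) + ((k : ℝ) * φ - m)|
        ≤ |(-((k : ℝ) * Real.sqrt 5))| + |(k : ℝ) * φ - m| := abs_add_le _ _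
      _ ≤ (k : ℝ) * Real.sqrt 5 + 1 := by
          rw [abs_neg, abs_of_nonneg (by positivity)]
          linarith
  have hden : (0:ℝ) < (k : ℝ) * Real.sqrt 5 + 1 := by positivity
  rw [div_le_iff₀ hden]
  calc (1:ℝ) ≤ |((k : ℝ) * φ - m) * ((k : ℝ) * ψ - m)| := hP1
    _ = |(k : ℝ) * φ - m| * |(k : ℝ) * ψ - m| := abs_mul _ _
    _ ≤ |(k : ℝ) * φ - m| * ((k : ℝ) * Real.sqrt 5 + 1) := by
        exact mul_le_mul_of_nonneg_left hb (abs_nonneg _)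

lemma aux_shift (n k : ℕ) (hn : 3 ≤ n) (hk1 : 1 ≤ k) (hk2 : k ≤ Nat.fib (n - 1)) :
    ⌊((Nat.fib n : ℝ) + (k : ℝ)) * φ⌋ = (Nat.fib (n + 1) : ℤ) + ⌊(k : ℝ) * φ⌋ := by
  obtain ⟨p, rfl⟩ : ∃ p, n = p + 3 := ⟨n - 3, by omega⟩
  have habsψ : |ψ| = φ⁻¹ := by
    rw [abs_of_neg goldenConj_neg, ← inv_goldenRatio]
  -- bound : k√5 + 1 < φ^n
  have hfib : (Nat.fib (p + 2) : ℝ) * Real.sqrt 5 = φ ^ (p + 2) - ψ ^ (p + 2) := by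
    rw [Real.coe_fib_eq]
    field_simp
  have hψlt : |ψ| < 1 := by
    rw [habsψ]
    exact inv_lt_one_of_one_lt₀ one_lt_goldenRatio
  have hψ2 : -ψ ^ (p + 2) ≤ ψ ^ 2 := by
    calc -ψ ^ (p + 2) ≤ |ψ ^ (p + 2)| := neg_le_abs _
      _ = |ψ| ^ (p + 2) := by rw [abs_pow]
      _ ≤ |ψ| ^ 2 := pow_le_pow_of_le_one (abs_nonneg _) hψlt.le (by omega)
      _ = ψ ^ 2 := sq_abs ψ
  have hs5 : Real.sqrt 5 ^ 2 = 5 := Real.sq_sqrt (by norm_num)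
  have hs5' : (2:ℝ) < Real.sqrt 5 := by nlinarith [Real.sqrt_nonneg 5]
  have hstep : ψ ^ 2 + 1 < φ := by
    rw [goldenConj_sq]
    simp only [goldenConj, goldenRatio]
    nlinarith
  have hφ1 : φ ≤ φ ^ (p + 1) := by
    calc φ = φ ^ 1 := (pow_one φ).symm
      _ ≤ φ ^ (p + 1) := pow_le_pow_right₀ one_lt_goldenRatio.le (by omega)
  have hgoldpow : φ ^ (p + 3) = φ ^ (p + 2) + φ ^ (p + 1) := by
    have := goldenRatio_pow_sub_goldenRatio_pow (p + 1)
    linarith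
  have hklt : (k : ℝ) * Real.sqrt 5 + 1 < φ ^ (p + 3) := by
    have hkle : (k : ℝ) ≤ (Nat.fib (p + 2) : ℝ) := by exact_mod_cast hk2
    have : (k : ℝ) * Real.sqrt 5 ≤ φ ^ (p + 2) - ψ ^ (p + 2) := by
      rw [← hfib]
      exact mul_le_mul_of_nonneg_right hkle (Real.sqrt_nonneg 5)
    nlinarith
  -- now the floor argument
  set m := ⌊(k : ℝ) * φ⌋ with hm
  have hm1 : (m : ℝ) ≤ (k : ℝ) * φ := Int.floor_le _
  have hm2 : (k : ℝ) * φ < m + 1 := Int.lt_floor_add_one _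
  have hd1 : 1 / ((k : ℝ) * Real.sqrt 5 + 1) ≤ (k : ℝ) * φ - m := by
    have := aux_dist k m hk1 (by rw [abs_of_nonneg (by linarith)]; linarith)
    rwa [abs_of_nonneg (by linarith)] at this
  have hd2 : 1 / ((k : ℝ) * Real.sqrt 5 + 1) ≤ (m : ℝ) + 1 - (k : ℝ) * φ := by
    have := aux_dist k (m + 1) hk1 (by
      rw [abs_of_nonpos (by push_cast; linarith)]; push_cast; linarith)
    rw [abs_of_nonpos (by push_cast; linarith)] at this
    push_cast at this ⊢
    linarith
  have hψn : |ψ ^ (p + 3)| < 1 / ((k : ℝ) * Real.sqrt 5 + 1) := by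
    rw [abs_pow, habsψ, inv_pow, ← one_div]
    have hφpos : (0:ℝ) < φ ^ (p + 3) := pow_pos goldenRatio_pos _
    rw [div_lt_div_iff₀ hφpos (by positivity)]
    linarith
  have habs1 : ψ ^ (p + 3) ≤ |ψ ^ (p + 3)| := le_abs_self _
  have habs2 : -|ψ ^ (p + 3)| ≤ ψ ^ (p + 3) := neg_abs_le _
  -- (fib n + k) φ = fib (n+1) + (kφ - ψ^n)
  have hkey : ((Nat.fib (p + 3) : ℝ) + (k : ℝ)) * φ
      = ((k : ℝ) * φ - ψ ^ (p + 3)) + (Nat.fib (p + 4) : ℝ) := by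
    have := fib_succ_sub_goldenRatio_mul_fib (p + 3)
    linarith [this]
  rw [hkey]
  have : ((Nat.fib (p + 4) : ℝ)) = ((Nat.fib (p + 4) : ℤ) : ℝ) := by push_cast; ring
  rw [this, Int.floor_add_intCast]
  have hfl : ⌊(k : ℝ) * φ - ψ ^ (p + 3)⌋ = m := by
    apply Int.floor_eq_iff.mpr
    constructor
    · linarith
    · push_cast; linarith
  rw [hfl]
  ring

/-- For every `n ≥ 3` and `2 ≤ k ≤ F_{n−1}`,
`⌊(F_n + k)·φ⌋ − ⌊(F_n + k − 1)·φ⌋ = ⌊k·φ⌋ − ⌊(k − 1)·φ⌋`,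
where `φ = (1+√5)/2`. -/
theorem floor_diff_phi (n k : ℕ) (hn : 3 ≤ n) (hk1 : 2 ≤ k)
    (hk2 : k ≤ Nat.fib (n - 1)) :
    ⌊((Nat.fib n : ℝ) + (k : ℝ)) * ((1 + Real.sqrt 5) / 2)⌋
      - ⌊((Nat.fib n : ℝ) + (k : ℝ) - 1) * ((1 + Real.sqrt 5) / 2)⌋
    = ⌊(k : ℝ) * ((1 + Real.sqrt 5) / 2)⌋
      - ⌊((k : ℝ) - 1) * ((1 + Real.sqrt 5) / 2)⌋ := by
  have hφ : ((1 + Real.sqrt 5) / 2 : ℝ) = φ := rfl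
  have e1 := aux_shift n k hn (by omega) hk2
  have e2 := aux_shift n (k - 1) hn (by omega) (by omega)
  have hc : ((k - 1 : ℕ) : ℝ) = (k : ℝ) - 1 := by
    have : (1:ℕ) ≤ k := by omega
    push_cast [this]
    ring
  rw [hc] at e2
  have hc2 : ((Nat.fib n : ℝ) + (k : ℝ) - 1) = ((Nat.fib n : ℝ) + ((k : ℝ) - 1)) := by ring
  rw [hφ, hc2, e1, e2]
  ring
end

section
/- For every integer n ≥ 3, one has ⌊(F_n + 1)·φ²⌋ − 1 = F_{n+2} + 1, where φ = (1+√5)/2 and F_m denotes the m-th Fibonacci number. -/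
open goldenRatio in
/-- For every `n ≥ 3`, `⌊(F_n + 1)·φ²⌋ − 1 = F_{n+2} + 1`,
where `φ = (1+√5)/2`. -/
theorem floor_fib_add_one_phi_sq (n : ℕ) (hn : 3 ≤ n) :
    ⌊((Nat.fib n : ℝ) + 1) * ((1 + Real.sqrt 5) / 2) ^ 2⌋ - 1
      = (Nat.fib (n + 2) : ℤ) + 1 := by
  have h5 : Real.sqrt 5 = √5 := rfl
  have hs : (2:ℝ) < √5 := by
    have : (2:ℝ) = √4 := by
      rw [show (4:ℝ) = 2^2 by norm_num, Real.sqrt_sq]; norm_num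
    rw [this]; exact Real.sqrt_lt_sqrt (by norm_num) (by norm_num)
  have hs' : √5 < 3 := by
    have : (3:ℝ) = √9 := by
      rw [show (9:ℝ) = 3^2 by norm_num, Real.sqrt_sq]; norm_num
    rw [this]; exact Real.sqrt_lt_sqrt (by norm_num) (by norm_num)
  -- key identity: x = fib (n+2) + 2 + (φ - 1 - ψ^n)
  have hb := Real.coe_fib_eq n
  have hb2 := Real.coe_fib_eq (n + 2)
  have hsq : √5 * √5 = 5 := Real.mul_self_sqrt (by norm_num)
  have hns : √5 ≠ 0 := by positivity
  have key : ((Nat.fib n : ℝ) + 1) * ((1 + √5) / 2) ^ 2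
      = (Nat.fib (n + 2) : ℝ) + 2 + (φ - 1 - ψ ^ n) := by
    rw [hb, hb2]
    have hφ2 : φ ^ (n + 2) = φ ^ n * φ ^ 2 := by ring
    have hψ2 : ψ ^ (n + 2) = ψ ^ n * ψ ^ 2 := by ring
    rw [hφ2, hψ2, Real.goldenRatio_sq, Real.goldenConj_sq]
    show _ = _ + 2 + (φ - 1 - ψ ^ n)
    unfold Real.goldenRatio Real.goldenConj
    field_simp
    ring_nf
  rw [h5, key]
  -- bounds on ψ^n
  have habs : |ψ| = (√5 - 1) / 2 := by
    rw [abs_of_neg Real.goldenConj_neg]; unfold Real.goldenConj; ring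
  have hψn : |ψ ^ n| ≤ |ψ| ^ 3 := by
    rw [abs_pow]
    exact pow_le_pow_of_le_one (abs_nonneg _) (by rw [habs]; nlinarith) hn
  have hcube : |ψ| ^ 3 = √5 - 2 := by
    rw [habs]; nlinarith
  rw [hcube] at hψn
  have h1 : ψ ^ n ≤ √5 - 2 := (abs_le.mp hψn).2
  have h2 : -(√5 - 2) ≤ ψ ^ n := (abs_le.mp hψn).1
  have hlo : (0:ℝ) ≤ φ - 1 - ψ ^ n := by unfold Real.goldenRatio; nlinarith
  have hhi : φ - 1 - ψ ^ n < 1 := by unfold Real.goldenRatio; nlinarith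
  have : ⌊(Nat.fib (n + 2) : ℝ) + 2 + (φ - 1 - ψ ^ n)⌋ = (Nat.fib (n+2) : ℤ) + 2 := by
    rw [Int.floor_eq_iff]
    push_cast
    constructor <;> nlinarith
  rw [this]; ring
end

section
/- The map fib is a strictly increasing bijection from the positive integers onto the set of fibbinary numbers: for every positive integer m with Zeckendorf representation m = F_{i_1} + F_{i_2} + ⋯ + F_{i_k} (distinct, nonconsecutive indices i_1 > i_2 > ⋯ > i_k ≥ 2), the number fib(m) := Σ_{j=1}^{k} 2^{i_j − 2} is the m-th positive integer (in increasing order) whose binary representation contains no two consecutive ones. -/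
attribute [local instance 0] Classical.propDecidable

namespace FibbinAux

open Finset

lemma isFibbinary_zero : IsFibbinary 0 := by
  intro i ⟨h1, _⟩
  simp [Nat.zero_testBit] at h1

lemma isFibbinary_two_pow (k : ℕ) : IsFibbinary (2 ^ k) := by
  intro i ⟨h1, h2⟩
  have e1 : i = k := by
    by_contra h
    rw [Nat.testBit_two_pow_of_ne (fun hh => h hh.symm)] at h1
    exact Bool.false_ne_true h1
  have e2 : i + 1 = k := by
    by_contra h
    rw [Nat.testBit_two_pow_of_ne (fun hh => h hh.symm)] at h2
    exact Bool.false_ne_true h2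
  omega

lemma testBit_two_pow_add {k z : ℕ} (hz : z < 2 ^ k) (i : ℕ) :
    (2 ^ k + z).testBit i = if i = k then true else z.testBit i := by
  rcases lt_trichotomy i k with h | h | h
  · rw [Nat.testBit_two_pow_add_gt h, if_neg h.ne]
  · subst h
    rw [Nat.testBit_two_pow_add_eq, Nat.testBit_eq_false_of_lt hz, if_pos rfl]
    rfl
  · rw [if_neg h.ne']
    have h2 : 2 ^ k + z < 2 ^ i := by
      have : 2 ^ (k + 1) ≤ 2 ^ i := Nat.pow_le_pow_right (by norm_num) h
      have : 2 ^ k + z < 2 ^ (k + 1) := by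
        rw [pow_succ]; omega
      omega
    rw [Nat.testBit_eq_false_of_lt h2,
      Nat.testBit_eq_false_of_lt (lt_trans hz (lt_of_lt_of_le (Nat.pow_lt_pow_succ (by norm_num))
        (Nat.pow_le_pow_right (by norm_num) h)))]

lemma lt_pow_of_testBit_false {k z : ℕ} (hz : z < 2 ^ (k + 1)) (hb : z.testBit k = false) :
    z < 2 ^ k := by
  by_contra h
  push_neg at h
  have h2k : 2 ^ (k + 1) = 2 ^ k * 2 := pow_succ 2 k
  have hd : z / 2 ^ k = 1 := Nat.div_eq_of_lt_le (by omega) (by omega)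
  rw [Nat.testBit_eq_decide_div_mod_eq, hd] at hb
  simp at hb

lemma isFibbinary_two_pow_add {k z : ℕ} (hz : z < 2 ^ k) :
    IsFibbinary (2 ^ (k + 1) + z) ↔ IsFibbinary z := by
  have hz1 : z < 2 ^ (k + 1) := lt_trans hz (Nat.pow_lt_pow_succ (by norm_num))
  have tb := testBit_two_pow_add hz1
  constructor
  · intro hf i ⟨h1, h2⟩
    have hik : i + 1 < k := by
      by_contra h
      have hzl : z < 2 ^ (i + 1) :=
        lt_of_lt_of_le hz (Nat.pow_le_pow_right (by norm_num) (by omega))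
      rw [Nat.testBit_eq_false_of_lt hzl] at h2
      exact Bool.false_ne_true h2
    exact hf i ⟨by rw [tb i, if_neg (by omega)]; exact h1,
      by rw [tb (i + 1), if_neg (by omega)]; exact h2⟩
  · intro hf i ⟨h1, h2⟩
    rw [tb i] at h1
    rw [tb (i + 1)] at h2
    by_cases hi : i = k + 1
    · rw [if_neg (by omega)] at h2
      have : z < 2 ^ (i + 1) :=
        lt_of_lt_of_le hz (Nat.pow_le_pow_right (by norm_num) (by omega))
      rw [Nat.testBit_eq_false_of_lt this] at h2
      exact Bool.false_ne_true h2
    · rw [if_neg hi] at h1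
      by_cases hi' : i + 1 = k + 1
      · have : i = k := by omega
        subst this
        rw [Nat.testBit_eq_false_of_lt hz] at h1
        exact Bool.false_ne_true h1
      · rw [if_neg hi'] at h2
        exact hf i ⟨h1, h2⟩

/-- The number of fibbinary numbers in `[0, 2^k)` is `fib (k+2)`. -/
lemma countA (k : ℕ) : ((range (2 ^ k)).filter IsFibbinary).card = Nat.fib (k + 2) := by
  induction k using Nat.strong_induction_on with
  | _ k ih =>
    match k with
    | 0 =>
      norm_num [Finset.range_one, Finset.filter_singleton, isFibbinary_zero]
    | 1 =>
      have h1 : IsFibbinary 1 := by simpa using isFibbinary_two_pow 0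
      norm_num [show (2:ℕ)^1 = 2 from rfl, Finset.range_add_one, Finset.range_one,
        Finset.filter_insert, Finset.filter_singleton, isFibbinary_zero, h1]
    | (k + 2) =>
      have ih1 := ih (k + 1) (by omega)
      have ih0 := ih k (by omega)
      have e : 2 ^ (k + 2) = 2 ^ (k + 1) + 2 ^ (k + 1) := by ring
      have hdisj : Disjoint ((range (2 ^ (k + 1))).filter IsFibbinary)
          (((range (2 ^ (k + 1))).map (addLeftEmbedding (2 ^ (k + 1)))).filter IsFibbinary) := by
        simp only [Finset.disjoint_left, Finset.mem_filter, Finset.mem_range, Finset.mem_map,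
          addLeftEmbedding_apply]
        rintro m ⟨hm, _⟩ ⟨⟨z, hz, rfl⟩, _⟩
        omega
      rw [e, Finset.range_add, Finset.filter_union, Finset.card_union_of_disjoint hdisj, ih1,
        Finset.filter_map, Finset.card_map]
      have hset : (range (2 ^ (k + 1))).filter (IsFibbinary ∘ (addLeftEmbedding (2 ^ (k + 1))))
          = (range (2 ^ k)).filter IsFibbinary := by
        ext z
        simp only [Finset.mem_filter, Finset.mem_range, Function.comp_apply,
          addLeftEmbedding_apply]
        constructor
        · rintro ⟨hz, hf⟩
          have tb := testBit_two_pow_add hz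
          have hbk : z.testBit k = false := by
            by_contra hb
            exact hf k ⟨by rw [tb k, if_neg (by omega)]; simpa using hb,
              by rw [tb (k + 1), if_pos rfl]⟩
          have hzk : z < 2 ^ k := lt_pow_of_testBit_false hz hbk
          exact ⟨hzk, (isFibbinary_two_pow_add hzk).mp hf⟩
        · rintro ⟨hz, hf⟩
          exact ⟨lt_trans hz (Nat.pow_lt_pow_succ (by norm_num)),
            (isFibbinary_two_pow_add hz).mpr hf⟩
      rw [hset, ih0]
      have hf := @Nat.fib_add_two (k + 2)
      rw [show k + 1 + 2 = k + 2 + 1 from by omega]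
      omega

lemma sum_range_two_pow_lt (n : ℕ) : ∑ b ∈ range n, 2 ^ b < 2 ^ n := by
  induction n with
  | zero => simp
  | succ n ih => rw [Finset.sum_range_succ, pow_succ]; omega

lemma sum_bound {s' : Finset ℕ} {M : ℕ} (h2 : ∀ a ∈ s', 2 ≤ a)
    (hlt : ∀ a ∈ s', a + 1 < M) : ∑ a ∈ s', 2 ^ (a - 2) < 2 ^ (M - 3) := by
  have he : ∑ b ∈ s'.image (· - 2), 2 ^ b = ∑ a ∈ s', 2 ^ (a - 2) :=
    Finset.sum_image (fun x hx y hy h => by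
      have := h2 x hx; have := h2 y hy; omega)
  rw [← he]
  calc ∑ b ∈ s'.image (· - 2), 2 ^ b ≤ ∑ b ∈ range (M - 3), 2 ^ b := by
        apply Finset.sum_le_sum_of_subset
        intro b hb
        obtain ⟨a, ha, rfl⟩ := Finset.mem_image.mp hb
        have := h2 a ha; have := hlt a ha
        exact Finset.mem_range.mpr (by omega)
    _ < 2 ^ (M - 3) := sum_range_two_pow_lt _

/-- Splitting lemma: counting fibbinary numbers below `2^(k+1) + x` for `x < 2^k`. -/
lemma split (k x : ℕ) (hx : x < 2 ^ k) :
    ((range (2 ^ (k + 1) + x)).filter IsFibbinary).card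
      = Nat.fib (k + 3) + ((range x).filter IsFibbinary).card := by
  have hdisj : Disjoint ((range (2 ^ (k + 1))).filter IsFibbinary)
      (((range x).map (addLeftEmbedding (2 ^ (k + 1)))).filter IsFibbinary) := by
    simp only [Finset.disjoint_left, Finset.mem_filter, Finset.mem_range, Finset.mem_map,
      addLeftEmbedding_apply]
    rintro m ⟨hm, _⟩ ⟨⟨z, hz, rfl⟩, _⟩
    omega
  rw [Finset.range_add, Finset.filter_union, Finset.card_union_of_disjoint hdisj, countA (k + 1),
    Finset.filter_map, Finset.card_map]
  have heq : (range x).filter (IsFibbinary ∘ (addLeftEmbedding (2 ^ (k + 1))))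
      = (range x).filter IsFibbinary := by
    apply Finset.filter_congr
    intro z hz
    have hzk : z < 2 ^ k := lt_trans (Finset.mem_range.mp hz) hx
    simpa [addLeftEmbedding_apply] using isFibbinary_two_pow_add hzk
  rw [heq]

/-- Main counting lemma. -/
lemma countB : ∀ (n : ℕ) (s : Finset ℕ), s.card ≤ n → (∀ a ∈ s, 2 ≤ a) →
    (∀ a ∈ s, a + 1 ∉ s) →
    ((range (∑ a ∈ s, 2 ^ (a - 2))).filter IsFibbinary).card = ∑ a ∈ s, Nat.fib a := by
  intro n
  induction n with
  | zero =>
    intro s hcard _ _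
    have : s = ∅ := Finset.card_eq_zero.mp (by omega)
    subst this
    simp
  | succ n ih =>
    intro s hcard h2 hnc
    rcases s.eq_empty_or_nonempty with rfl | hne
    · simp
    · set M := s.max' hne with hMdef
      have hM : M ∈ s := s.max'_mem hne
      set s' := s.erase M with hs'def
      have hcard' : s'.card ≤ n := by
        rw [hs'def, Finset.card_erase_of_mem hM]
        omega
      have hs'2 : ∀ a ∈ s', 2 ≤ a := fun a ha => h2 a (Finset.mem_of_mem_erase ha)
      have hs'nc : ∀ a ∈ s', a + 1 ∉ s' := fun a ha h =>
        hnc a (Finset.mem_of_mem_erase ha) (Finset.mem_of_mem_erase h)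
      have hlt : ∀ a ∈ s', a + 1 < M := by
        intro a ha
        have hle := Finset.le_max' s a (Finset.mem_of_mem_erase ha)
        have hne' : a ≠ M := Finset.ne_of_mem_erase ha
        have h1 : a + 1 ≠ M := fun h => hnc a (Finset.mem_of_mem_erase ha) (h ▸ hM)
        omega
      have hsum : ∑ a ∈ s, 2 ^ (a - 2) = 2 ^ (M - 2) + ∑ a ∈ s', 2 ^ (a - 2) :=
        (Finset.add_sum_erase s _ hM).symm
      have hsumf : ∑ a ∈ s, Nat.fib a = Nat.fib M + ∑ a ∈ s', Nat.fib a :=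
        (Finset.add_sum_erase s _ hM).symm
      have ihs' := ih s' hcard' hs'2 hs'nc
      have hM2 : 2 ≤ M := h2 M hM
      rcases s'.eq_empty_or_nonempty with he | hne'
      · rw [hsum, hsumf, he]
        simp only [Finset.sum_empty, Nat.add_zero]
        have := countA (M - 2)
        rwa [show M - 2 + 2 = M by omega] at this
      · have hM4 : 4 ≤ M := by
          obtain ⟨a, ha⟩ := hne'
          have := hs'2 a ha; have := hlt a ha
          omega
        have hx' : ∑ a ∈ s', 2 ^ (a - 2) < 2 ^ (M - 3) := sum_bound hs'2 hlt
        rw [hsum, hsumf, show M - 2 = (M - 3) + 1 by omega, split (M - 3) _ hx', ihs',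
          show M - 3 + 3 = M by omega]

lemma isFibbinarySum : ∀ (n : ℕ) (s : Finset ℕ), s.card ≤ n → (∀ a ∈ s, 2 ≤ a) →
    (∀ a ∈ s, a + 1 ∉ s) → IsFibbinary (∑ a ∈ s, 2 ^ (a - 2)) := by
  intro n
  induction n with
  | zero =>
    intro s hcard _ _
    have : s = ∅ := Finset.card_eq_zero.mp (by omega)
    subst this
    simpa using isFibbinary_zero
  | succ n ih =>
    intro s hcard h2 hnc
    rcases s.eq_empty_or_nonempty with rfl | hne
    · simpa using isFibbinary_zero
    · set M := s.max' hne with hMdef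
      have hM : M ∈ s := s.max'_mem hne
      set s' := s.erase M with hs'def
      have hcard' : s'.card ≤ n := by
        rw [hs'def, Finset.card_erase_of_mem hM]
        omega
      have hs'2 : ∀ a ∈ s', 2 ≤ a := fun a ha => h2 a (Finset.mem_of_mem_erase ha)
      have hs'nc : ∀ a ∈ s', a + 1 ∉ s' := fun a ha h =>
        hnc a (Finset.mem_of_mem_erase ha) (Finset.mem_of_mem_erase h)
      have hlt : ∀ a ∈ s', a + 1 < M := by
        intro a ha
        have hle := Finset.le_max' s a (Finset.mem_of_mem_erase ha)
        have hne' : a ≠ M := Finset.ne_of_mem_erase ha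
        have h1 : a + 1 ≠ M := fun h => hnc a (Finset.mem_of_mem_erase ha) (h ▸ hM)
        omega
      have hsum : ∑ a ∈ s, 2 ^ (a - 2) = 2 ^ (M - 2) + ∑ a ∈ s', 2 ^ (a - 2) :=
        (Finset.add_sum_erase s _ hM).symm
      rcases s'.eq_empty_or_nonempty with he | hne'
      · rw [hsum, he]
        simpa using isFibbinary_two_pow (M - 2)
      · have hM4 : 4 ≤ M := by
          obtain ⟨a, ha⟩ := hne'
          have := hs'2 a ha; have := hlt a ha
          omega
        have hx' : ∑ a ∈ s', 2 ^ (a - 2) < 2 ^ (M - 3) := sum_bound hs'2 hlt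
        rw [hsum, show M - 2 = (M - 3) + 1 by omega]
        exact (isFibbinary_two_pow_add hx').mpr (ih s' hcard' hs'2 hs'nc)

lemma infinite_fibbinary : {m : ℕ | 0 < m ∧ IsFibbinary m}.Infinite :=
  Set.infinite_of_injective_forall_mem (f := fun k : ℕ => 2 ^ k)
    (Nat.pow_right_injective le_rfl)
    (fun k => ⟨pow_pos (by norm_num) k, isFibbinary_two_pow k⟩)

end FibbinAux

open FibbinAux in
/-- `fibbin` is a strictly increasing bijection from the positive integers onto
the set of (positive) fibbinary numbers, and if a positive integer `m` has
Zeckendorf representation `m = ∑_{a ∈ s} F_a` (where `s` is a nonempty set of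
indices that are `≥ 2` and pairwise nonconsecutive), then
`fibbin m = ∑_{a ∈ s} 2^(a−2)`. -/
theorem fibbin_strictMono_bijOn_and_zeckendorf :
    StrictMonoOn fibbin {n : ℕ | 1 ≤ n} ∧
    Set.BijOn fibbin {n : ℕ | 1 ≤ n} {m : ℕ | 0 < m ∧ IsFibbinary m} ∧
    ∀ s : Finset ℕ, s.Nonempty → (∀ a ∈ s, 2 ≤ a) → (∀ a ∈ s, a + 1 ∉ s) →
      fibbin (∑ a ∈ s, Nat.fib a) = ∑ a ∈ s, 2 ^ (a - 2) := by
  set p : ℕ → Prop := fun m => 0 < m ∧ IsFibbinary m with hp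
  have hinf : (setOf p).Infinite := infinite_fibbinary
  have hmono : StrictMonoOn fibbin {n : ℕ | 1 ≤ n} := by
    intro a ha b hb hab
    simp only [Set.mem_setOf_eq] at ha hb
    exact (Nat.nth_lt_nth hinf).mpr (by omega)
  refine ⟨hmono, ⟨?_, hmono.injOn, ?_⟩, ?_⟩
  · intro n _
    exact Nat.nth_mem_of_infinite hinf (n - 1)
  · intro x hx
    refine ⟨Nat.count p x + 1, by simp, ?_⟩
    show Nat.nth p (Nat.count p x + 1 - 1) = x
    rw [Nat.add_sub_cancel]
    exact Nat.nth_count hx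
  · intro s hne h2 hnc
    set x := ∑ a ∈ s, 2 ^ (a - 2) with hxdef
    have hxf : IsFibbinary x := isFibbinarySum s.card s le_rfl h2 hnc
    have hxpos : 0 < x := Finset.sum_pos (fun a _ => pow_pos (by norm_num) _) hne
    have hpx : p x := ⟨hxpos, hxf⟩
    have hm : ((Finset.range x).filter IsFibbinary).card = ∑ a ∈ s, Nat.fib a :=
      countB s.card s le_rfl h2 hnc
    have hmpos : 0 < ∑ a ∈ s, Nat.fib a :=
      Finset.sum_pos (fun a ha => Nat.fib_pos.mpr (by have := h2 a ha; omega)) hne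
    have hcount : Nat.count p x = (∑ a ∈ s, Nat.fib a) - 1 := by
      have hfe : (Finset.range x).filter p = ((Finset.range x).filter IsFibbinary).erase 0 := by
        ext m
        simp only [Finset.mem_filter, Finset.mem_erase, Finset.mem_range, hp]
        constructor
        · rintro ⟨hr, hm0, hf⟩; exact ⟨by omega, hr, hf⟩
        · rintro ⟨hm0, hr, hf⟩; exact ⟨hr, by omega, hf⟩
      have h0mem : (0 : ℕ) ∈ (Finset.range x).filter IsFibbinary :=
        Finset.mem_filter.mpr ⟨Finset.mem_range.mpr hxpos, isFibbinary_zero⟩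
      rw [Nat.count_eq_card_filter_range, hfe, Finset.card_erase_of_mem h0mem, hm]
    show Nat.nth p (∑ a ∈ s, Nat.fib a - 1) = x
    rw [← hcount]
    exact Nat.nth_count hpx
end
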